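/- arXiv:1705.03810 — 9 statements merged into one kernel-verified Lean document; each statement's English description precedes it below -/
import Mathlib

section
/- Let (H, A, ‖·‖♯) be a CS space with bound L > 0, let 1 ≤ p < ∞, and let Φ : H → ℝ^m be a linear map satisfying the (p, ρ, α)-robust width property over B♯ with ρ > 0, α > 0 and ρ ≤ 1/(4L). Then for every x♮ ∈ H, every ε ≥ 0, every e ∈ ℝ^m with ‖e‖_{ℓp} ≤ ε, setting y = Φx♮ + e, every x⋆ ∈ H that is a minimizer of ‖x‖♯ subject to ‖Φx − y‖_{ℓp} ≤ ε (i.e., ‖Φx⋆ − y‖_{ℓp} ≤ ε and ‖x⋆‖♯ ≤ ‖x‖♯ for every x ∈ H with ‖Φx − y‖_{ℓp} ≤ ε) satisfies ‖x⋆ − x♮‖₂ ≤ 4ρ‖x♮ − a‖♯ + (2/α)ε for every a ∈ A. -/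
open Finset

/-- The ℓp norm of a vector in ℝ^m, for real `p`. -/
noncomputable def lpNorm {m : ℕ} (p : ℝ) (u : Fin m → ℝ) : ℝ :=
  (∑ i, |u i| ^ p) ^ (1 / p)

lemma lpNorm_neg {m : ℕ} (p : ℝ) (u : Fin m → ℝ) : lpNorm p (-u) = lpNorm p u := by
  simp [lpNorm]

lemma lpNorm_add_le {m : ℕ} {p : ℝ} (hp : 1 ≤ p) (u v : Fin m → ℝ) :
    lpNorm p (u + v) ≤ lpNorm p u + lpNorm p v := by
  simpa [lpNorm] using Real.Lp_add_le Finset.univ u v hp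

/-- Theorem 1, (a) ⇒ (b): robust width property implies stable and robust recovery
for ℓp-constrained compressive sensing. -/
theorem rwp_implies_stable_robust_recovery
    {H : Type*} [NormedAddCommGroup H] [InnerProductSpace ℝ H] [FiniteDimensional ℝ H]
    (A : Set H) (sharp : H → ℝ) (L : ℝ) (hL : 0 < L)
    -- sharp is a norm
    (sharp_nonneg : ∀ x, 0 ≤ sharp x)
    (sharp_def : ∀ x, sharp x = 0 → x = 0)
    (sharp_hom : ∀ (c : ℝ) (x : H), sharp (c • x) = |c| * sharp x)
    (sharp_tri : ∀ x y, sharp (x + y) ≤ sharp x + sharp y)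
    -- CS space axioms
    (hA0 : (0 : H) ∈ A)
    (hdecomp : ∀ a ∈ A, ∀ v : H, ∃ v₁ v₂ : H, v = v₁ + v₂ ∧
      sharp (a + v₁) = sharp a + sharp v₁ ∧ sharp v₂ ≤ L * ‖v‖)
    (p : ℝ) (hp : 1 ≤ p) {m : ℕ} (Φ : H →ₗ[ℝ] (Fin m → ℝ))
    (ρ α : ℝ) (hρ : 0 < ρ) (hα : 0 < α) (hρL : ρ ≤ 1 / (4 * L))
    -- (p, ρ, α)-robust width property over the sharp unit ball
    (hRWP : ∀ x : H, lpNorm p (Φ x) < α * ‖x‖ → ‖x‖ ≤ ρ * sharp x) :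
    ∀ (xnat : H) (ε : ℝ), 0 ≤ ε → ∀ e : Fin m → ℝ, lpNorm p e ≤ ε →
      ∀ xstar : H,
        lpNorm p (Φ xstar - (Φ xnat + e)) ≤ ε →
        (∀ x : H, lpNorm p (Φ x - (Φ xnat + e)) ≤ ε → sharp xstar ≤ sharp x) →
        ∀ a ∈ A, ‖xstar - xnat‖ ≤ 4 * ρ * sharp (xnat - a) + (2 / α) * ε := by
  intro xnat ε hε e he xstar hfeas hmin a ha
  have sharp_neg : ∀ x : H, sharp (-x) = sharp x := by
    intro x
    have := sharp_hom (-1) x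
    simpa using this
  -- xnat is feasible
  have hxnat_feas : lpNorm p (Φ xnat - (Φ xnat + e)) ≤ ε := by
    have : Φ xnat - (Φ xnat + e) = -e := by abel
    rw [this, lpNorm_neg]; exact he
  have hxs : sharp xstar ≤ sharp xnat := hmin xnat hxnat_feas
  have hεα : 0 ≤ (2 / α) * ε := by positivity
  have hsna : 0 ≤ sharp (xnat - a) := sharp_nonneg _
  by_cases hc : lpNorm p (Φ (xstar - xnat)) < α * ‖xstar - xnat‖
  · -- RWP applies
    have hw : ‖xstar - xnat‖ ≤ ρ * sharp (xstar - xnat) := hRWP _ hc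
    obtain ⟨v₁, v₂, hv, h1, h2⟩ := hdecomp a ha (xstar - xnat)
    -- a + v₁ = xstar - (xnat - a) - v₂
    have hav : a + v₁ = xstar + -(xnat - a) + -v₂ := by
      have hx : xstar = v₁ + v₂ + xnat := by
        rw [← hv]; abel
      rw [hx]; abel
    have e1 : sharp (a + v₁) ≤ sharp xstar + sharp (xnat - a) + sharp v₂ := by
      rw [hav]
      calc sharp (xstar + -(xnat - a) + -v₂)
          ≤ sharp (xstar + -(xnat - a)) + sharp (-v₂) := sharp_tri _ _
        _ ≤ sharp xstar + sharp (-(xnat - a)) + sharp (-v₂) := by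
            have := sharp_tri xstar (-(xnat - a)); linarith
        _ = sharp xstar + sharp (xnat - a) + sharp v₂ := by
            rw [sharp_neg, sharp_neg]
    have e2 : sharp xnat ≤ sharp a + sharp (xnat - a) := by
      have : xnat = a + (xnat - a) := by abel
      calc sharp xnat = sharp (a + (xnat - a)) := by rw [← this]
        _ ≤ sharp a + sharp (xnat - a) := sharp_tri _ _
    have key : sharp v₁ ≤ 2 * sharp (xnat - a) + sharp v₂ := by linarith [h1 ▸ e1]
    have e3 : sharp (xstar - xnat) ≤ sharp v₁ + sharp v₂ := by
      rw [hv]; exact sharp_tri _ _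
    have hρL' : ρ * L ≤ 1 / 4 := by
      rw [le_div_iff₀ (by positivity)] at hρL
      nlinarith
    have hnn : (0:ℝ) ≤ ‖xstar - xnat‖ := norm_nonneg _
    -- combine
    have h4 : ‖xstar - xnat‖ ≤ 4 * ρ * sharp (xnat - a) := by
      nlinarith [mul_le_mul_of_nonneg_left e3 hρ.le,
        mul_le_mul_of_nonneg_left key hρ.le,
        mul_le_mul_of_nonneg_left h2 hρ.le,
        mul_le_mul_of_nonneg_right hρL' hnn]
    linarith
  · push_neg at hc
    have htri : lpNorm p (Φ (xstar - xnat)) ≤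
        lpNorm p (Φ xstar - (Φ xnat + e)) + lpNorm p e := by
      have heq : Φ (xstar - xnat) = (Φ xstar - (Φ xnat + e)) + e := by
        rw [map_sub]; abel
      rw [heq]
      exact lpNorm_add_le hp _ _
    have : α * ‖xstar - xnat‖ ≤ 2 * ε := by linarith
    have hnv : ‖xstar - xnat‖ ≤ (2 / α) * ε := by
      rw [div_mul_eq_mul_div, le_div_iff₀ hα]
      linarith [this]
    have : 0 ≤ 4 * ρ * sharp (xnat - a) := by positivity
    linarith
end

section
/- Let (H, A, ‖·‖♯) be a CS space with bound L > 0, let 1 ≤ p < ∞, let Φ : H → ℝ^m be a linear map, and let C₀, C₁ > 0. Suppose that for every x♮ ∈ H, every ε ≥ 0, and every e ∈ ℝ^m with ‖e‖_{ℓp} ≤ ε, setting y = Φx♮ + e, every x⋆ ∈ H that is a minimizer of ‖x‖♯ subject to ‖Φx − y‖_{ℓp} ≤ ε (i.e., ‖Φx⋆ − y‖_{ℓp} ≤ ε and ‖x⋆‖♯ ≤ ‖x‖♯ for every x with ‖Φx − y‖_{ℓp} ≤ ε) satisfies ‖x⋆ − x♮‖₂ ≤ C₀‖x♮ − a‖♯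 + C₁ε for every a ∈ A. Then Φ satisfies the (p, 2C₀, 1/(2C₁))-robust width property over B♯. -/
open Finset

/-- Theorem 1, (b) ⇒ (a): if the stable and robust recovery guarantee holds for
ℓp-constrained compressive sensing with constants C₀, C₁, then Φ satisfies the
(p, 2C₀, 1/(2C₁))-robust width property over the sharp unit ball. -/
theorem stable_robust_recovery_implies_rwp
    {H : Type*} [NormedAddCommGroup H] [InnerProductSpace ℝ H] [FiniteDimensional ℝ H]
    (A : Set H) (sharp : H → ℝ) (L : ℝ) (hL : 0 < L)
    -- sharp is a norm
    (sharp_nonneg : ∀ x, 0 ≤ sharp x)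
    (sharp_def : ∀ x, sharp x = 0 → x = 0)
    (sharp_hom : ∀ (c : ℝ) (x : H), sharp (c • x) = |c| * sharp x)
    (sharp_tri : ∀ x y, sharp (x + y) ≤ sharp x + sharp y)
    -- CS space axioms
    (hA0 : (0 : H) ∈ A)
    (hdecomp : ∀ a ∈ A, ∀ v : H, ∃ v₁ v₂ : H, v = v₁ + v₂ ∧
      sharp (a + v₁) = sharp a + sharp v₁ ∧ sharp v₂ ≤ L * ‖v‖)
    (p : ℝ) (hp : 1 ≤ p) {m : ℕ} (Φ : H →ₗ[ℝ] (Fin m → ℝ))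
    (C₀ C₁ : ℝ) (hC₀ : 0 < C₀) (hC₁ : 0 < C₁)
    -- stable and robust recovery guarantee
    (hrec : ∀ (xnat : H) (ε : ℝ), 0 ≤ ε → ∀ e : Fin m → ℝ, lpNorm p e ≤ ε →
      ∀ xstar : H,
        lpNorm p (Φ xstar - (Φ xnat + e)) ≤ ε →
        (∀ x : H, lpNorm p (Φ x - (Φ xnat + e)) ≤ ε → sharp xstar ≤ sharp x) →
        ∀ a ∈ A, ‖xstar - xnat‖ ≤ C₀ * sharp (xnat - a) + C₁ * ε) :
    -- conclusion: (p, 2C₀, 1/(2C₁))-robust width property over B♯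
    ∀ x : H, lpNorm p (Φ x) < (1 / (2 * C₁)) * ‖x‖ → ‖x‖ ≤ 2 * C₀ * sharp x := by
  intro x hx
  have hp0 : p ≠ 0 := by linarith
  have hnn : ∀ u : Fin m → ℝ, 0 ≤ lpNorm p u := by
    intro u
    apply Real.rpow_nonneg
    exact Finset.sum_nonneg fun i _ => Real.rpow_nonneg (abs_nonneg _) _
  have hzero : lpNorm p (0 : Fin m → ℝ) = 0 := by
    simp [lpNorm, Real.zero_rpow hp0, Real.zero_rpow (inv_ne_zero hp0)]
  have hneg : ∀ u : Fin m → ℝ, lpNorm p (-u) = lpNorm p u := by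
    intro u; simp [lpNorm]
  have hsharp0 : sharp (0 : H) = 0 := by
    have := sharp_hom 0 0
    simpa using this
  have hε0 : 0 ≤ lpNorm p (Φ x) := hnn _
  have key := hrec x (lpNorm p (Φ x)) hε0 (-(Φ x)) (by rw [hneg]) 0
    (by simpa [hzero] using hε0) (fun x' _ => by rw [hsharp0]; exact sharp_nonneg x') 0 hA0
  simp only [zero_sub, sub_zero, norm_neg] at key
  have h1 : C₁ * lpNorm p (Φ x) < C₁ * ((1 / (2 * C₁)) * ‖x‖) := by
    exact mul_lt_mul_of_pos_left hx hC₁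
  have h2 : C₁ * ((1 / (2 * C₁)) * ‖x‖) = ‖x‖ / 2 := by
    field_simp
  linarith
end

section
/- Let (H, A, ‖·‖♯) be a CS space with bound L > 0 and let x⋆, x♮ ∈ H satisfy ‖x⋆‖♯ ≤ ‖x♮‖♯. Then for every a ∈ A, ‖x⋆ − x♮‖♯ ≤ 2‖x♮ − a‖♯ + 2L‖x⋆ − x♮‖₂. -/
/-- Inequality (5) in the paper: in a CS space with bound L, if ‖x⋆‖♯ ≤ ‖x♮‖♯ then
‖x⋆ − x♮‖♯ ≤ 2‖x♮ − a‖♯ + 2L‖x⋆ − x♮‖₂ for every a ∈ A. -/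
theorem cs_space_sharp_bound
    {H : Type*} [NormedAddCommGroup H] [InnerProductSpace ℝ H] [FiniteDimensional ℝ H]
    (A : Set H) (sharp : H → ℝ) (L : ℝ) (hL : 0 < L)
    -- sharp is a norm
    (sharp_nonneg : ∀ x, 0 ≤ sharp x)
    (sharp_def : ∀ x, sharp x = 0 → x = 0)
    (sharp_hom : ∀ (c : ℝ) (x : H), sharp (c • x) = |c| * sharp x)
    (sharp_tri : ∀ x y, sharp (x + y) ≤ sharp x + sharp y)
    -- CS space axioms
    (hA0 : (0 : H) ∈ A)
    (hdecomp : ∀ a ∈ A, ∀ v : H, ∃ v₁ v₂ : H, v = v₁ + v₂ ∧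
      sharp (a + v₁) = sharp a + sharp v₁ ∧ sharp v₂ ≤ L * ‖v‖)
    (xstar xnat : H) (hmin : sharp xstar ≤ sharp xnat) :
    ∀ a ∈ A, sharp (xstar - xnat) ≤ 2 * sharp (xnat - a) + 2 * L * ‖xstar - xnat‖ := by

  intro a ha
  obtain ⟨v₁, v₂, hv, hadd, hv₂⟩ := hdecomp a ha (xstar - xnat)
  have hneg : ∀ x : H, sharp (-x) = sharp x := by
    intro x
    have := sharp_hom (-1) x
    simpa using this
  have h1 : sharp v₁ = sharp (a + v₁) - sharp a := by linarith
  have hrw : a + v₁ = xstar + ((a - xnat) + (-v₂)) := by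
    have : v₁ = xstar - xnat - v₂ := by
      rw [hv]; abel
    rw [this]; abel
  have h2 : sharp (a + v₁) ≤ sharp xstar + sharp (xnat - a) + sharp v₂ := by
    rw [hrw]
    calc sharp (xstar + ((a - xnat) + (-v₂)))
        ≤ sharp xstar + sharp ((a - xnat) + (-v₂)) := sharp_tri _ _
      _ ≤ sharp xstar + (sharp (a - xnat) + sharp (-v₂)) := by
          linarith [sharp_tri (a - xnat) (-v₂)]
      _ = sharp xstar + sharp (xnat - a) + sharp v₂ := by
          rw [hneg]
          have : sharp (a - xnat) = sharp (xnat - a) := by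
            rw [← hneg (xnat - a)]; rw [neg_sub]
          linarith
  have h3 : sharp xnat ≤ sharp a + sharp (xnat - a) := by
    have := sharp_tri a (xnat - a)
    simpa using this
  have h4 : sharp (xstar - xnat) ≤ sharp v₁ + sharp v₂ := by
    rw [hv]; exact sharp_tri _ _
  linarith
end

section
/- Let (H, A, ‖·‖♯) be a CS space with bound L > 0, let 1 ≤ p < ∞, and let Φ : H → ℝ^m be a linear map satisfying the robust null space property with respect to ℓp with constants φ > 0 and τ > 0, i.e., ‖v‖₂ ≤ φ‖v − a‖♯ + τ‖Φv‖_{ℓp} for all v ∈ H and all a ∈ A. Then Φ satisfies the (p, 2φ, 1/(2τ))-robust width property over B♯. -/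
open Finset

/-- Theorem 2: the robust null space property with respect to ℓp with constants φ, τ
implies the (p, 2φ, 1/(2τ))-robust width property over the sharp unit ball. -/
theorem robust_nsp_implies_rwp
    {H : Type*} [NormedAddCommGroup H] [InnerProductSpace ℝ H] [FiniteDimensional ℝ H]
    (A : Set H) (sharp : H → ℝ) (L : ℝ) (hL : 0 < L)
    -- sharp is a norm
    (sharp_nonneg : ∀ x, 0 ≤ sharp x)
    (sharp_def : ∀ x, sharp x = 0 → x = 0)
    (sharp_hom : ∀ (c : ℝ) (x : H), sharp (c • x) = |c| * sharp x)
    (sharp_tri : ∀ x y, sharp (x + y) ≤ sharp x + sharp y)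
    -- CS space axioms
    (hA0 : (0 : H) ∈ A)
    (hdecomp : ∀ a ∈ A, ∀ v : H, ∃ v₁ v₂ : H, v = v₁ + v₂ ∧
      sharp (a + v₁) = sharp a + sharp v₁ ∧ sharp v₂ ≤ L * ‖v‖)
    (p : ℝ) (hp : 1 ≤ p) {m : ℕ} (Φ : H →ₗ[ℝ] (Fin m → ℝ))
    (φ τ : ℝ) (hφ : 0 < φ) (hτ : 0 < τ)
    -- robust null space property with respect to ℓp
    (hNSP : ∀ v : H, ∀ a ∈ A, ‖v‖ ≤ φ * sharp (v - a) + τ * lpNorm p (Φ v)) :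
    -- conclusion: (p, 2φ, 1/(2τ))-robust width property over B♯
    ∀ x : H, lpNorm p (Φ x) < (1 / (2 * τ)) * ‖x‖ → ‖x‖ ≤ 2 * φ * sharp x := by
  intro x hx
  have h := hNSP x 0 hA0
  rw [sub_zero] at h
  have h2 : τ * lpNorm p (Φ x) < τ * ((1 / (2 * τ)) * ‖x‖) :=
    mul_lt_mul_of_pos_left hx hτ
  have h3 : τ * ((1 / (2 * τ)) * ‖x‖) = ‖x‖ / 2 := by
    field_simp
  nlinarith [sharp_nonneg x]
end

section
/- Let Φ : ℂ^N → ℂ^m be a linear map, let s be a positive integer with s ≤ N, let 1 ≤ p < ∞, and let ψ, τ > 0 with ψ < 1. Suppose Φ satisfies the traditional robust null space property with respect to ℓp of order s: for every set S ⊆ {1,…,N} with |S| ≤ s and every v ∈ ℂ^N, ‖v_S‖_{ℓ2} ≤ (ψ/√s)‖v_{S^c}‖_{ℓ1} + τ‖Φv‖_{ℓp}, where v_S denotes the vector that agrees with v on S and is zero outside S. Then for every v ∈ ℂ^N and every a ∈ ℂ^N with at most s nonzero entries, ‖v‖_{ℓ2} ≤ (ψ/√s + 1)‖v − a‖_{ℓ1}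 + τ‖Φv‖_{ℓp}. -/
open Finset

/-- The ℓp norm of a vector in ℂ^m, for real `p`. -/
noncomputable def lpNormC {m : ℕ} (p : ℝ) (u : Fin m → ℂ) : ℝ :=
  (∑ i, ‖u i‖ ^ p) ^ (1 / p)

/-- The ℓ1 norm of a vector in ℂ^N. -/
noncomputable def l1NormC {N : ℕ} (v : Fin N → ℂ) : ℝ :=
  ∑ j, ‖v j‖

/-- The ℓ2 norm of a vector in ℂ^N. -/
noncomputable def l2NormC {N : ℕ} (v : Fin N → ℂ) : ℝ :=
  Real.sqrt (∑ j, ‖v j‖ ^ 2)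

/-- The restriction of a vector to a set of coordinates (zero outside the set). -/
noncomputable def restrictC {N : ℕ} (S : Finset (Fin N)) (v : Fin N → ℂ) : Fin N → ℂ :=
  fun j => if j ∈ S then v j else 0

lemma sqrt_add_le' (a b : ℝ) (ha : 0 ≤ a) (hb : 0 ≤ b) :
    Real.sqrt (a + b) ≤ Real.sqrt a + Real.sqrt b := by
  have h1 := Real.sq_sqrt ha
  have h2 := Real.sq_sqrt hb
  have h3 := Real.sqrt_nonneg a
  have h4 := Real.sqrt_nonneg b
  have : a + b ≤ (Real.sqrt a + Real.sqrt b) ^ 2 := by nlinarith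
  calc Real.sqrt (a + b) ≤ Real.sqrt ((Real.sqrt a + Real.sqrt b) ^ 2) :=
        Real.sqrt_le_sqrt this
    _ = Real.sqrt a + Real.sqrt b := Real.sqrt_sq (by positivity)

lemma l2_le_l1 {N : ℕ} (v : Fin N → ℂ) : l2NormC v ≤ l1NormC v := by
  unfold l2NormC l1NormC
  have h : ∑ j, ‖v j‖ ^ 2 ≤ (∑ j, ‖v j‖) ^ 2 := by
    rw [sq]
    calc ∑ j, ‖v j‖ ^ 2 = ∑ j, ‖v j‖ * ‖v j‖ := by
          simp [sq]
      _ ≤ ∑ j, ‖v j‖ * (∑ k, ‖v k‖) := by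
          apply Finset.sum_le_sum
          intro j _
          apply mul_le_mul_of_nonneg_left _ (norm_nonneg _)
          exact Finset.single_le_sum (fun k _ => norm_nonneg _) (Finset.mem_univ j)
      _ = (∑ j, ‖v j‖) * (∑ k, ‖v k‖) := by
          rw [← Finset.sum_mul]
  calc Real.sqrt (∑ j, ‖v j‖ ^ 2) ≤ Real.sqrt ((∑ j, ‖v j‖) ^ 2) :=
        Real.sqrt_le_sqrt h
    _ = ∑ j, ‖v j‖ := Real.sqrt_sq (by positivity)

/-- Example 1: the traditional robust null space property with respect to ℓp of order s
implies the general robust null space property of Definition 3. -/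
theorem traditional_nsp_implies_general_nsp
    {N m : ℕ} (Φ : (Fin N → ℂ) →ₗ[ℂ] (Fin m → ℂ))
    (s : ℕ) (hs : 0 < s) (hsN : s ≤ N)
    (p : ℝ) (hp : 1 ≤ p)
    (ψ τ : ℝ) (hψ : 0 < ψ) (hψ1 : ψ < 1) (hτ : 0 < τ)
    (hNSP : ∀ (S : Finset (Fin N)), S.card ≤ s → ∀ v : Fin N → ℂ,
      l2NormC (restrictC S v) ≤
        (ψ / Real.sqrt s) * l1NormC (restrictC Sᶜ v) + τ * lpNormC p (Φ v)) :
    ∀ (v a : Fin N → ℂ), {j | a j ≠ 0}.ncard ≤ s →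
      l2NormC v ≤ (ψ / Real.sqrt s + 1) * l1NormC (v - a) + τ * lpNormC p (Φ v) := by
  intro v a ha
  classical
  set S : Finset (Fin N) := Finset.univ.filter (fun j => a j ≠ 0) with hS
  have hScard : S.card ≤ s := by
    have : {j | a j ≠ 0}.ncard = S.card := by
      rw [hS]
      rw [← Set.ncard_coe_finset]
      congr 1
      ext j
      simp
    omega
  -- key pointwise facts
  have hsplit : l2NormC v ≤ l2NormC (restrictC S v) + l2NormC (restrictC Sᶜ v) := by
    unfold l2NormC restrictC
    have : ∑ j, ‖v j‖ ^ 2 =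
        (∑ j, ‖if j ∈ S then v j else 0‖ ^ 2) +
        (∑ j, ‖if j ∈ Sᶜ then v j else 0‖ ^ 2) := by
      rw [← Finset.sum_add_distrib]
      apply Finset.sum_congr rfl
      intro j _
      by_cases h : j ∈ S <;> simp [h]
    rw [this]
    exact sqrt_add_le' _ _ (by positivity) (by positivity)
  have hle1 : l1NormC (restrictC Sᶜ v) ≤ l1NormC (v - a) := by
    unfold l1NormC restrictC
    apply Finset.sum_le_sum
    intro j _
    by_cases h : j ∈ Sᶜ
    · have haj : a j = 0 := by
        simp [hS, Finset.mem_compl, Finset.mem_filter] at h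
        exact h
      simp [h, Pi.sub_apply, haj]
    · simp [h]
  have h1 := hNSP S hScard v
  have h2 : l2NormC (restrictC Sᶜ v) ≤ l1NormC (restrictC Sᶜ v) := l2_le_l1 _
  have hψs : 0 ≤ ψ / Real.sqrt s := by positivity
  nlinarith [hle1, h1, h2, hsplit]
end

section
/- Let Φ : ℂ^N → ℂ^m be a linear map, let w = (w₁,…,w_N) be weights with w_j ≥ 1 for all j, let s > 0, let 1 ≤ p < ∞, and let ψ, τ > 0 with ψ < 1. Suppose Φ satisfies the weighted robust null space property with respect to ℓp of order s: for every v ∈ ℂ^N and every set S ⊆ {1,…,N} with w(S) := ∑_{j∈S} w_j² ≤ s, one has ‖v_S‖_{ℓ2} ≤ (ψ/√s)‖v_{S^c}‖_{w,1} + τ‖Φv‖_{ℓp}. Then for every v ∈ ℂ^N and every a ∈ ℂ^N with ∑_{j : a_j ≠ 0} w_j² ≤ s, one has ‖v‖_{ℓ2} ≤ (ψ/√s + 1)‖v − a‖_{w,1} + τ‖Φv‖_{ℓp}. -/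
open Finset

/-- The weighted ℓ1 norm of a vector in ℂ^N with weights w. -/
noncomputable def w1NormC {N : ℕ} (w : Fin N → ℝ) (v : Fin N → ℂ) : ℝ :=
  ∑ j, w j * ‖v j‖

/-- Example 1 (weighted case): the weighted robust null space property with respect to ℓp
of order s implies the general robust null space property of Definition 3. -/
theorem weighted_nsp_implies_general_nsp
    {N m : ℕ} (Φ : (Fin N → ℂ) →ₗ[ℂ] (Fin m → ℂ))
    (w : Fin N → ℝ) (hw : ∀ j, 1 ≤ w j)
    (s : ℝ) (hs : 0 < s)
    (p : ℝ) (hp : 1 ≤ p)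
    (ψ τ : ℝ) (hψ : 0 < ψ) (hψ1 : ψ < 1) (hτ : 0 < τ)
    (hNSP : ∀ (v : Fin N → ℂ) (S : Finset (Fin N)), (∑ j ∈ S, (w j) ^ 2) ≤ s →
      l2NormC (restrictC S v) ≤
        (ψ / Real.sqrt s) * w1NormC w (restrictC Sᶜ v) + τ * lpNormC p (Φ v)) :
    ∀ (v a : Fin N → ℂ),
      (∑ j ∈ Finset.univ.filter (fun j => a j ≠ 0), (w j) ^ 2) ≤ s →
      l2NormC v ≤ (ψ / Real.sqrt s + 1) * w1NormC w (v - a) + τ * lpNormC p (Φ v) := by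
  intro v a ha
  set S : Finset (Fin N) := Finset.univ.filter (fun j => a j ≠ 0) with hS
  -- split of the squared ℓ2 norm
  have habs : ∀ (u : Fin N → ℂ) j, 0 ≤ ‖u j‖ := fun u j => norm_nonneg _
  have hsplit : (∑ j, ‖v j‖ ^ 2) =
      (∑ j, ‖restrictC S v j‖ ^ 2) +
      (∑ j, ‖restrictC Sᶜ v j‖ ^ 2) := by
    rw [← Finset.sum_add_distrib]
    refine Finset.sum_congr rfl fun j _ => ?_
    by_cases hj : j ∈ S <;> simp [restrictC, hj]
  have h1 : l2NormC v ≤ l2NormC (restrictC S v) + l2NormC (restrictC Sᶜ v) := by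
    unfold l2NormC
    rw [hsplit]
    set A := ∑ j, ‖restrictC S v j‖ ^ 2 with hA
    set B := ∑ j, ‖restrictC Sᶜ v j‖ ^ 2 with hB
    have hA0 : 0 ≤ A := Finset.sum_nonneg fun j _ => sq_nonneg _
    have hB0 : 0 ≤ B := Finset.sum_nonneg fun j _ => sq_nonneg _
    have key : A + B ≤ (Real.sqrt A + Real.sqrt B) ^ 2 := by
      nlinarith [Real.sq_sqrt hA0, Real.sq_sqrt hB0, Real.sqrt_nonneg A, Real.sqrt_nonneg B]
    calc Real.sqrt (A + B) ≤ Real.sqrt ((Real.sqrt A + Real.sqrt B) ^ 2) :=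
          Real.sqrt_le_sqrt key
      _ = Real.sqrt A + Real.sqrt B := Real.sqrt_sq (by positivity)
  -- l2 ≤ weighted l1 for the restriction to Sᶜ
  have h2 : l2NormC (restrictC Sᶜ v) ≤ w1NormC w (restrictC Sᶜ v) := by
    unfold l2NormC w1NormC
    have hnonneg : ∀ j ∈ Finset.univ, (0:ℝ) ≤ ‖restrictC Sᶜ v j‖ :=
      fun j _ => habs _ _
    calc Real.sqrt (∑ j, ‖restrictC Sᶜ v j‖ ^ 2)
        ≤ Real.sqrt ((∑ j, ‖restrictC Sᶜ v j‖) ^ 2) := by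
          apply Real.sqrt_le_sqrt
          exact Finset.sum_sq_le_sq_sum_of_nonneg hnonneg
      _ = ∑ j, ‖restrictC Sᶜ v j‖ := by
          rw [Real.sqrt_sq (Finset.sum_nonneg hnonneg)]
      _ ≤ ∑ j, w j * ‖restrictC Sᶜ v j‖ := by
          refine Finset.sum_le_sum fun j _ => ?_
          nlinarith [hw j, habs (restrictC Sᶜ v) j]
  -- restriction to Sᶜ of v equals restriction of v - a
  have h3 : restrictC Sᶜ v = restrictC Sᶜ (v - a) := by
    funext j
    by_cases hj : j ∈ Sᶜ
    · have : a j = 0 := by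
        by_contra hne
        exact (Finset.mem_compl.mp hj) (Finset.mem_filter.mpr ⟨Finset.mem_univ _, hne⟩)
      simp [restrictC, hj, this]
    · simp [restrictC, hj]
  have h4 : w1NormC w (restrictC Sᶜ (v - a)) ≤ w1NormC w (v - a) := by
    unfold w1NormC
    refine Finset.sum_le_sum fun j _ => ?_
    by_cases hj : j ∈ Sᶜ
    · simp [restrictC, hj]
    · simp only [restrictC, if_neg hj, map_zero, norm_zero, mul_zero]
      exact mul_nonneg (le_trans zero_le_one (hw j)) (habs _ _)
  have hNS := hNSP v S ha
  have hwnonneg : 0 ≤ w1NormC w (v - a) := by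
    unfold w1NormC
    exact Finset.sum_nonneg fun j _ =>
      mul_nonneg (le_trans zero_le_one (hw j)) (habs _ _)
  have hrw : w1NormC w (restrictC Sᶜ v) ≤ w1NormC w (v - a) := by
    rw [h3]; exact h4
  have hψs : 0 ≤ ψ / Real.sqrt s := by positivity
  calc l2NormC v ≤ l2NormC (restrictC S v) + l2NormC (restrictC Sᶜ v) := h1
    _ ≤ ((ψ / Real.sqrt s) * w1NormC w (restrictC Sᶜ v) + τ * lpNormC p (Φ v))
        + w1NormC w (restrictC Sᶜ v) := add_le_add hNS h2
    _ ≤ ((ψ / Real.sqrt s) * w1NormC w (v - a) + τ * lpNormC p (Φ v))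
        + w1NormC w (v - a) := by
          refine add_le_add (add_le_add_left (mul_le_mul_of_nonneg_left hrw hψs) _) ?_
          rw [h3]; exact h4
    _ = (ψ / Real.sqrt s + 1) * w1NormC w (v - a) + τ * lpNormC p (Φ v) := by ring
end

section
/- Let Φ : ℝ^N → ℝ^m be a linear map, let 1 ≤ p < ∞, let s be a positive integer with s ≤ N, let μ > 0, δ ≥ 0, and suppose ‖Φx‖_{ℓp} ≤ μ(1+δ)‖x‖_{ℓ2} for every x ∈ ℝ^N with at most s nonzero entries. Let ρ > 0 and let x ∈ ℝ^N satisfy ‖x‖_{ℓ2} > ρ‖x‖_{ℓ1}. Let S ⊆ {1,…,N} be a set of indices of the s largest-in-absolute-value entries of x, i.e., |S| = s and |x_j| ≤ |x_i| for every i ∈ S and j ∉ S. Then ‖x − x_S‖_{ℓ2} < ‖x‖_{ℓ2}/(ρ√s) and ‖Φ(x − x_S)‖_{ℓp} < (1+δ)μ‖x‖_{ℓ2}/(ρ√s). -/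
open Finset

/-- The ℓ1 norm of a vector in ℝ^N. -/
noncomputable def l1Norm {N : ℕ} (v : Fin N → ℝ) : ℝ :=
  ∑ j, |v j|

/-- The ℓ2 norm of a vector in ℝ^N. -/
noncomputable def l2Norm {N : ℕ} (v : Fin N → ℝ) : ℝ :=
  Real.sqrt (∑ j, (v j) ^ 2)

/-- The restriction of a vector to a set of coordinates (zero outside the set). -/
def restrictVec {N : ℕ} (S : Finset (Fin N)) (v : Fin N → ℝ) : Fin N → ℝ :=
  fun j => if j ∈ S then v j else 0

lemma support_restrict_le {N : ℕ} (A : Finset (Fin N)) (x : Fin N → ℝ) :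
    {j | restrictVec A x j ≠ 0}.ncard ≤ A.card := by
  have h : {j | restrictVec A x j ≠ 0} ⊆ ↑A := by
    intro j hj
    by_contra hj'
    have : j ∉ A := by simpa using hj'
    exact hj (by simp [restrictVec, this])
  calc {j | restrictVec A x j ≠ 0}.ncard ≤ (↑A : Set (Fin N)).ncard :=
        Set.ncard_le_ncard h A.finite_toSet
    _ = A.card := Set.ncard_coe_finset A

lemma sum_sq_restrict {N : ℕ} (A : Finset (Fin N)) (x : Fin N → ℝ) :
    ∑ j, (restrictVec A x j) ^ 2 = ∑ j ∈ A, (x j) ^ 2 := by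
  have e : ∀ j, (restrictVec A x j) ^ 2 = if j ∈ A then (x j) ^ 2 else 0 := by
    intro j; by_cases h : j ∈ A <;> simp [restrictVec, h]
  rw [Finset.sum_congr rfl (fun j _ => e j), Finset.sum_ite_mem, Finset.univ_inter]

lemma l2_restrict_le {N : ℕ} (A : Finset (Fin N)) (x : Fin N → ℝ) {t : ℝ} (ht : 0 ≤ t)
    (hA : ∀ j ∈ A, |x j| ≤ t) {s : ℕ} (hcard : A.card ≤ s) :
    l2Norm (restrictVec A x) ≤ Real.sqrt s * t := by
  rw [l2Norm, sum_sq_restrict]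
  have h1 : ∑ j ∈ A, (x j) ^ 2 ≤ (s : ℝ) * t ^ 2 := by
    calc ∑ j ∈ A, (x j) ^ 2 ≤ ∑ j ∈ A, t ^ 2 := by
          refine Finset.sum_le_sum fun j hj => ?_
          rw [← sq_abs]
          exact pow_le_pow_left₀ (abs_nonneg _) (hA j hj) 2
      _ = (A.card : ℝ) * t ^ 2 := by simp [mul_comm]
      _ ≤ (s : ℝ) * t ^ 2 := by
          have : (A.card : ℝ) ≤ (s : ℝ) := by exact_mod_cast hcard
          nlinarith [sq_nonneg t]
  calc Real.sqrt (∑ j ∈ A, (x j) ^ 2) ≤ Real.sqrt ((s : ℝ) * t ^ 2) :=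
        Real.sqrt_le_sqrt h1
    _ = Real.sqrt s * t := by
        rw [Real.sqrt_mul (Nat.cast_nonneg s), Real.sqrt_sq ht]

lemma exists_top_subset {N : ℕ} (x : Fin N → ℝ) :
    ∀ (k : ℕ) (A : Finset (Fin N)), k ≤ A.card →
      ∃ B ⊆ A, B.card = k ∧ ∀ i ∈ B, ∀ j ∈ A \ B, |x j| ≤ |x i| := by
  intro k
  induction k with
  | zero => exact fun A _ => ⟨∅, Finset.empty_subset A, rfl, by simp⟩
  | succ n ih =>
    intro A hA
    obtain ⟨B, hBA, hBcard, hBmax⟩ := ih A (Nat.le_of_succ_le hA)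
    have hne : (A \ B).Nonempty := by
      rw [← Finset.card_pos, Finset.card_sdiff_of_subset hBA]
      omega
    obtain ⟨i₀, hi₀mem, hi₀max⟩ := Finset.exists_max_image (A \ B) (fun j => |x j|) hne
    have hi₀A : i₀ ∈ A := (Finset.mem_sdiff.mp hi₀mem).1
    have hi₀B : i₀ ∉ B := (Finset.mem_sdiff.mp hi₀mem).2
    refine ⟨insert i₀ B, ?_, ?_, ?_⟩
    · exact Finset.insert_subset hi₀A hBA
    · rw [Finset.card_insert_of_notMem hi₀B, hBcard]
    · intro i hi j hj
      rw [Finset.mem_sdiff, Finset.mem_insert] at hj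
      push_neg at hj
      have hjAB : j ∈ A \ B := Finset.mem_sdiff.mpr ⟨hj.1, hj.2.2⟩
      rcases Finset.mem_insert.mp hi with rfl | hiB
      · exact hi₀max j hjAB
      · exact hBmax i hiB j hjAB

lemma key_bound {N m : ℕ} (Φ : (Fin N → ℝ) →ₗ[ℝ] (Fin m → ℝ))
    (p : ℝ) (hp : 1 ≤ p) (s : ℕ) (hs : 0 < s)
    (μ δ : ℝ) (hμ : 0 < μ) (hδ : 0 ≤ δ)
    (hRIP : ∀ z : Fin N → ℝ, {j | z j ≠ 0}.ncard ≤ s →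
      lpNorm p (Φ z) ≤ μ * (1 + δ) * l2Norm z)
    (x : Fin N → ℝ) :
    ∀ (n : ℕ) (A : Finset (Fin N)), A.card ≤ n → ∀ t : ℝ, 0 ≤ t → (∀ j ∈ A, |x j| ≤ t) →
      lpNorm p (Φ (restrictVec A x)) ≤
        μ * (1 + δ) * (Real.sqrt s * t + (∑ j ∈ A, |x j|) / Real.sqrt s) := by
  have hμδ : 0 ≤ μ * (1 + δ) := by positivity
  have hspos : (0 : ℝ) < s := by exact_mod_cast hs
  have hsqpos : 0 < Real.sqrt s := Real.sqrt_pos.mpr hspos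
  have hss : Real.sqrt s * Real.sqrt s = (s : ℝ) := Real.mul_self_sqrt (le_of_lt hspos)
  have hconv : ∀ c : ℝ, Real.sqrt s * (c / s) = c / Real.sqrt s := by
    intro c
    field_simp
    linear_combination c * hss
  intro n
  induction n with
  | zero =>
    intro A hA t ht hAt
    have hcard : A.card ≤ s := by omega
    have h1 := hRIP (restrictVec A x) (le_trans (support_restrict_le A x) hcard)
    have h2 := l2_restrict_le A x ht hAt hcard
    have habs : 0 ≤ (∑ j ∈ A, |x j|) / Real.sqrt s := by positivity
    calc lpNorm p (Φ (restrictVec A x)) ≤ μ * (1 + δ) * l2Norm (restrictVec A x) := h1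
      _ ≤ μ * (1 + δ) * (Real.sqrt s * t) := mul_le_mul_of_nonneg_left h2 hμδ
      _ ≤ μ * (1 + δ) * (Real.sqrt s * t + (∑ j ∈ A, |x j|) / Real.sqrt s) := by nlinarith
  | succ n ih =>
    intro A hA t ht hAt
    by_cases hcase : A.card ≤ s
    · have h1 := hRIP (restrictVec A x) (le_trans (support_restrict_le A x) hcase)
      have h2 := l2_restrict_le A x ht hAt hcase
      have habs : 0 ≤ (∑ j ∈ A, |x j|) / Real.sqrt s := by positivity
      calc lpNorm p (Φ (restrictVec A x)) ≤ μ * (1 + δ) * l2Norm (restrictVec A x) := h1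
        _ ≤ μ * (1 + δ) * (Real.sqrt s * t) := mul_le_mul_of_nonneg_left h2 hμδ
        _ ≤ μ * (1 + δ) * (Real.sqrt s * t + (∑ j ∈ A, |x j|) / Real.sqrt s) := by nlinarith
    · push_neg at hcase
      obtain ⟨B, hBA, hBcard, hBmax⟩ := exists_top_subset x s A (le_of_lt hcase)
      have hdecomp : restrictVec A x = restrictVec B x + restrictVec (A \ B) x := by
        funext j
        simp only [restrictVec, Pi.add_apply, Finset.mem_sdiff]
        by_cases h1 : j ∈ B
        · simp [h1, hBA h1]
        · by_cases h2 : j ∈ A <;> simp [h1, h2]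
      -- bound for the top block B
      have hBt : ∀ j ∈ B, |x j| ≤ t := fun j hj => hAt j (hBA hj)
      have hB1 := hRIP (restrictVec B x)
        (le_trans (support_restrict_le B x) (le_of_eq hBcard))
      have hB2 := l2_restrict_le B x ht hBt (le_of_eq hBcard)
      have hBfin : lpNorm p (Φ (restrictVec B x)) ≤ μ * (1 + δ) * (Real.sqrt s * t) :=
        le_trans hB1 (mul_le_mul_of_nonneg_left hB2 hμδ)
      -- bound for the rest via the induction hypothesis
      set t' : ℝ := (∑ i ∈ B, |x i|) / s with ht'def
      have ht' : 0 ≤ t' := by positivity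
      have hABt' : ∀ j ∈ A \ B, |x j| ≤ t' := by
        intro j hj
        have hle : (s : ℝ) * |x j| ≤ ∑ i ∈ B, |x i| := by
          calc (s : ℝ) * |x j| = ∑ _i ∈ B, |x j| := by
                rw [Finset.sum_const, hBcard, nsmul_eq_mul]
            _ ≤ ∑ i ∈ B, |x i| := Finset.sum_le_sum fun i hi => hBmax i hi j hj
        rw [ht'def, le_div_iff₀ hspos, mul_comm]
        exact hle
      have hcardAB : (A \ B).card ≤ n := by
        rw [Finset.card_sdiff_of_subset hBA, hBcard]
        omega
      have hrest := ih (A \ B) hcardAB t' ht' hABt'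
      have hst' : Real.sqrt s * t' = (∑ i ∈ B, |x i|) / Real.sqrt s := hconv _
      calc lpNorm p (Φ (restrictVec A x))
          = lpNorm p (Φ (restrictVec B x) + Φ (restrictVec (A \ B) x)) := by
            rw [hdecomp, map_add]
        _ ≤ lpNorm p (Φ (restrictVec B x)) + lpNorm p (Φ (restrictVec (A \ B) x)) :=
            lpNorm_add_le hp _ _
        _ ≤ μ * (1 + δ) * (Real.sqrt s * t) +
            μ * (1 + δ) * (Real.sqrt s * t' + (∑ j ∈ A \ B, |x j|) / Real.sqrt s) :=
            add_le_add hBfin hrest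
        _ = μ * (1 + δ) * (Real.sqrt s * t + (∑ j ∈ A, |x j|) / Real.sqrt s) := by
            rw [hst', ← Finset.sum_sdiff hBA]
            ring

/-- Lemma 1: if Φ satisfies the upper inequality of the (μ, s, δ)-RIP_{p,2} and
‖x‖₂ > ρ‖x‖₁, then the tail x − x_S is small in ℓ2 and in the image under Φ. -/
theorem rip_tail_bounds
    {N m : ℕ} (Φ : (Fin N → ℝ) →ₗ[ℝ] (Fin m → ℝ))
    (p : ℝ) (hp : 1 ≤ p)
    (s : ℕ) (hs : 0 < s) (hsN : s ≤ N)
    (μ δ : ℝ) (hμ : 0 < μ) (hδ : 0 ≤ δ)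
    (hRIPupper : ∀ z : Fin N → ℝ, {j | z j ≠ 0}.ncard ≤ s →
      lpNorm p (Φ z) ≤ μ * (1 + δ) * l2Norm z)
    (ρ : ℝ) (hρ : 0 < ρ)
    (x : Fin N → ℝ) (hx : l2Norm x > ρ * l1Norm x)
    (S : Finset (Fin N)) (hScard : S.card = s)
    (hSmax : ∀ i ∈ S, ∀ j ∉ S, |x j| ≤ |x i|) :
    l2Norm (x - restrictVec S x) < l2Norm x / (ρ * Real.sqrt s) ∧
    lpNorm p (Φ (x - restrictVec S x)) < (1 + δ) * μ * l2Norm x / (ρ * Real.sqrt s) := by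
  have hspos : (0 : ℝ) < s := by exact_mod_cast hs
  have hsqpos : 0 < Real.sqrt s := Real.sqrt_pos.mpr hspos
  have hss : Real.sqrt s * Real.sqrt s = (s : ℝ) := Real.mul_self_sqrt (le_of_lt hspos)
  set Sc : Finset (Fin N) := Finset.univ \ S with hScdef
  have hmemSc : ∀ j, j ∈ Sc ↔ j ∉ S := by
    intro j; simp [hScdef]
  have htail : x - restrictVec S x = restrictVec Sc x := by
    funext j
    by_cases h : j ∈ S <;> simp [restrictVec, (hmemSc j), h]
  set a : ℝ := ∑ i ∈ S, |x i| with hadef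
  set b : ℝ := ∑ j ∈ Sc, |x j| with hbdef
  have ha : 0 ≤ a := Finset.sum_nonneg fun i _ => abs_nonneg _
  have hb : 0 ≤ b := Finset.sum_nonneg fun j _ => abs_nonneg _
  have hab : b + a = l1Norm x := by
    rw [hadef, hbdef, hScdef, l1Norm, Finset.sum_sdiff (Finset.subset_univ S)]
  have hl1nonneg : 0 ≤ l1Norm x := by rw [← hab]; positivity
  have hl1lt : l1Norm x < l2Norm x / ρ := by
    rw [lt_div_iff₀ hρ, mul_comm]
    exact hx
  -- the threshold
  set t : ℝ := a / s with htdef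
  have ht : 0 ≤ t := by positivity
  have hSct : ∀ j ∈ Sc, |x j| ≤ t := by
    intro j hj
    have hjS : j ∉ S := (hmemSc j).mp hj
    have hle : (s : ℝ) * |x j| ≤ a := by
      calc (s : ℝ) * |x j| = ∑ _i ∈ S, |x j| := by
            rw [Finset.sum_const, hScard, nsmul_eq_mul]
        _ ≤ ∑ i ∈ S, |x i| := Finset.sum_le_sum fun i hi => hSmax i hi j hjS
    rw [htdef, le_div_iff₀ hspos, mul_comm]
    exact hle
  have hst : Real.sqrt s * t = a / Real.sqrt s := by
    rw [htdef]
    field_simp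
    linear_combination a * hss
  constructor
  · -- ℓ2 bound
    rw [htail]
    have hsum : ∑ j, (restrictVec Sc x j) ^ 2 ≤ (l1Norm x) ^ 2 / s := by
      rw [sum_sq_restrict]
      have h1 : ∑ j ∈ Sc, (x j) ^ 2 ≤ t * b := by
        rw [hbdef, Finset.mul_sum]
        refine Finset.sum_le_sum fun j hj => ?_
        rw [← sq_abs]
        have := hSct j hj
        nlinarith [abs_nonneg (x j)]
      have h2 : t * b ≤ (l1Norm x) ^ 2 / s := by
        rw [htdef, ← hab, div_mul_eq_mul_div, div_le_div_iff₀ hspos hspos]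
        have key : a * b ≤ (b + a) ^ 2 := by nlinarith
        nlinarith [mul_le_mul_of_nonneg_right key hspos.le]
      linarith
    have hl2le : l2Norm (restrictVec Sc x) ≤ l1Norm x / Real.sqrt s := by
      rw [l2Norm]
      calc Real.sqrt (∑ j, (restrictVec Sc x j) ^ 2)
          ≤ Real.sqrt ((l1Norm x) ^ 2 / s) := Real.sqrt_le_sqrt hsum
        _ = l1Norm x / Real.sqrt s := by
            rw [Real.sqrt_div (sq_nonneg _), Real.sqrt_sq hl1nonneg]
    calc l2Norm (restrictVec Sc x) ≤ l1Norm x / Real.sqrt s := hl2le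
      _ < (l2Norm x / ρ) / Real.sqrt s := by gcongr
      _ = l2Norm x / (ρ * Real.sqrt s) := by rw [div_div]
  · -- Φ bound
    rw [htail]
    have hcardSc : Sc.card ≤ N := le_trans (Finset.card_le_univ Sc) (by simp)
    have hkey := key_bound Φ p hp s hs μ δ hμ hδ hRIPupper x N Sc hcardSc t ht hSct
    have heq : μ * (1 + δ) * (Real.sqrt s * t + b / Real.sqrt s) =
        μ * (1 + δ) * (l1Norm x / Real.sqrt s) := by
      rw [hst, ← hab]
      ring
    have hμδ : 0 < μ * (1 + δ) := by positivity
    calc lpNorm p (Φ (restrictVec Sc x))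
        ≤ μ * (1 + δ) * (l1Norm x / Real.sqrt s) := by rw [← heq]; exact hkey
      _ < μ * (1 + δ) * ((l2Norm x / ρ) / Real.sqrt s) := by gcongr
      _ = (1 + δ) * μ * l2Norm x / (ρ * Real.sqrt s) := by
          rw [div_div]; ring
end

section
/- Let Φ : ℝ^N → ℝ^m be a linear map, let 1 ≤ p < ∞, let s be a positive integer with s ≤ N, let μ > 0 and 0 ≤ δ < 1/3, and suppose Φ satisfies the (μ, s, δ)-RIP_{p,2}. Then Φ satisfies the (p, 3/√s, (1/3 − δ)μ)-robust width property over B_{ℓ1}; that is, ‖x‖_{ℓ2} ≤ (3/√s)‖x‖_{ℓ1} for every x ∈ ℝ^N with ‖Φx‖_{ℓp} < (1/3 − δ)μ‖x‖_{ℓ2}. -/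
open Finset

lemma lpNorm_nonneg {m : ℕ} (p : ℝ) (u : Fin m → ℝ) : 0 ≤ lpNorm p u := by
  apply Real.rpow_nonneg
  exact Finset.sum_nonneg fun i _ => Real.rpow_nonneg (abs_nonneg _) _

lemma lpNorm_zero {m : ℕ} {p : ℝ} (hp : 1 ≤ p) : lpNorm p (0 : Fin m → ℝ) = 0 := by
  have hp0 : p ≠ 0 := by linarith
  simp [lpNorm, Real.zero_rpow hp0]
  exact Real.zero_rpow (by simp [hp0])

lemma lpNorm_sum_le {m : ℕ} {p : ℝ} (hp : 1 ≤ p) {ι : Type*} (t : Finset ι)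
    (f : ι → (Fin m → ℝ)) :
    lpNorm p (∑ k ∈ t, f k) ≤ ∑ k ∈ t, lpNorm p (f k) := by
  induction t using Finset.cons_induction with
  | empty => simp [lpNorm_zero hp]
  | cons a t ha ih =>
    rw [Finset.sum_cons, Finset.sum_cons]
    exact le_trans (lpNorm_add_le hp _ _) (by linarith)

lemma l2Norm_eq_norm {N : ℕ} (v : Fin N → ℝ) :
    l2Norm v = ‖(WithLp.equiv 2 (Fin N → ℝ)).symm v‖ := by
  rw [EuclideanSpace.norm_eq]
  simp [l2Norm, sq_abs]

lemma l2Norm_nonneg {N : ℕ} (v : Fin N → ℝ) : 0 ≤ l2Norm v := Real.sqrt_nonneg _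

lemma l2Norm_add_le {N : ℕ} (u v : Fin N → ℝ) : l2Norm (u + v) ≤ l2Norm u + l2Norm v := by
  simp only [l2Norm_eq_norm]
  rw [show (WithLp.equiv 2 (Fin N → ℝ)).symm (u + v)
      = (WithLp.equiv 2 (Fin N → ℝ)).symm u + (WithLp.equiv 2 (Fin N → ℝ)).symm v from rfl]
  exact norm_add_le _ _

lemma l2Norm_sum_le {N : ℕ} {ι : Type*} (t : Finset ι) (f : ι → (Fin N → ℝ)) :
    l2Norm (∑ k ∈ t, f k) ≤ ∑ k ∈ t, l2Norm (f k) := by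
  induction t using Finset.cons_induction with
  | empty => simp [l2Norm]
  | cons a t ha ih =>
    rw [Finset.sum_cons, Finset.sum_cons]
    exact le_trans (l2Norm_add_le _ _) (by linarith)

/-- Theorem 3: the (μ, s, δ)-RIP_{p,2} with δ < 1/3 implies the
(p, 3/√s, (1/3 − δ)μ)-robust width property over the ℓ1 unit ball. -/
theorem rip_implies_rwp
    {N m : ℕ} (Φ : (Fin N → ℝ) →ₗ[ℝ] (Fin m → ℝ))
    (p : ℝ) (hp : 1 ≤ p)
    (s : ℕ) (hs : 0 < s) (hsN : s ≤ N)
    (μ δ : ℝ) (hμ : 0 < μ) (hδ0 : 0 ≤ δ) (hδ : δ < 1 / 3)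
    (hRIP : ∀ z : Fin N → ℝ, {j | z j ≠ 0}.ncard ≤ s →
      μ * (1 - δ) * l2Norm z ≤ lpNorm p (Φ z) ∧ lpNorm p (Φ z) ≤ μ * (1 + δ) * l2Norm z) :
    ∀ x : Fin N → ℝ, lpNorm p (Φ x) < (1 / 3 - δ) * μ * l2Norm x →
      l2Norm x ≤ (3 / Real.sqrt s) * l1Norm x := by
  intro x hx
  have hN : 0 < N := lt_of_lt_of_le hs hsN
  have hsqrt : 0 < Real.sqrt s := Real.sqrt_pos.mpr (by exact_mod_cast hs)
  set σ : Equiv.Perm (Fin N) := Tuple.sort (fun i => -|x i|) with hσ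
  have hmono : Monotone ((fun i => -|x i|) ∘ σ) := Tuple.monotone_sort _
  have hanti : ∀ i j : Fin N, j ≤ i → |x (σ i)| ≤ |x (σ j)| := by
    intro i j hji
    have := hmono hji
    simpa using this
  set z : ℕ → Fin N → ℝ := fun k j => if (σ.symm j : ℕ) / s = k then x j else 0 with hz
  set B : ℕ → Finset (Fin N) := fun k => univ.filter (fun i : Fin N => (i : ℕ) / s = k) with hB
  -- x decomposes as sum of blocks
  have hdecomp : x = ∑ k ∈ range N, z k := by
    funext j
    rw [Finset.sum_apply]
    have hdj : (σ.symm j : ℕ) / s ∈ range N :=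
      mem_range.mpr (lt_of_le_of_lt (Nat.div_le_self _ _) (σ.symm j).isLt)
    simp only [hz]
    rw [Finset.sum_ite_eq (range N) ((σ.symm j : ℕ) / s) (fun _ => x j), if_pos hdj]
  -- sparsity of each block
  have hsparse : ∀ k : ℕ, {j | z k j ≠ 0}.ncard ≤ s := by
    intro k
    have hsub : {j | z k j ≠ 0} ⊆ ↑(univ.filter (fun j : Fin N => (σ.symm j : ℕ) / s = k)) := by
      intro j hj
      simp only [Set.mem_setOf_eq, hz] at hj
      by_cases h : (σ.symm j : ℕ) / s = k
      · simp [h]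
      · simp [h] at hj
    refine le_trans (le_trans (Set.ncard_le_ncard hsub (Finset.finite_toSet _))
      (le_of_eq (Set.ncard_coe_finset _))) ?_
    calc (univ.filter (fun j : Fin N => (σ.symm j : ℕ) / s = k)).card
        ≤ (Finset.range s).card := by
          apply Finset.card_le_card_of_injOn (fun j => (σ.symm j : ℕ) % s)
          · intro j hj
            exact Finset.mem_range.mpr (Nat.mod_lt _ hs)
          · intro a ha b hb hab
            simp only [Finset.coe_filter, Set.mem_setOf_eq] at ha hb
            have ha' : (σ.symm a : ℕ) / s = k := ha.2
            have hb' : (σ.symm b : ℕ) / s = k := hb.2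
            have hab' : (σ.symm a : ℕ) % s = (σ.symm b : ℕ) % s := hab
            have e1 : (σ.symm a : ℕ) = s * k + (σ.symm a : ℕ) % s := by
              conv_lhs => rw [← Nat.div_add_mod (σ.symm a : ℕ) s]
              rw [ha']
            have e2 : (σ.symm b : ℕ) = s * k + (σ.symm b : ℕ) % s := by
              conv_lhs => rw [← Nat.div_add_mod (σ.symm b : ℕ) s]
              rw [hb']
            have : (σ.symm a : ℕ) = (σ.symm b : ℕ) := by rw [e1, e2, hab']
            exact σ.symm.injective (Fin.val_injective this)
      _ = s := Finset.card_range s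
  have hBcard : ∀ k, (B k).card ≤ s := by
    intro k
    calc (B k).card ≤ (Finset.range s).card := by
          refine Finset.card_le_card_of_injOn (fun i => (i : ℕ) % s) ?_ ?_
          · intro i hi
            exact Finset.mem_range.mpr (Nat.mod_lt _ hs)
          · intro a ha b hb hab
            simp only [hB, Finset.coe_filter, Set.mem_setOf_eq] at ha hb
            have ha' : (a : ℕ) / s = k := ha.2
            have hb' : (b : ℕ) / s = k := hb.2
            have hab' : (a : ℕ) % s = (b : ℕ) % s := hab
            have e1 : (a : ℕ) = s * k + (a : ℕ) % s := by
              conv_lhs => rw [← Nat.div_add_mod (a : ℕ) s]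
              rw [ha']
            have e2 : (b : ℕ) = s * k + (b : ℕ) % s := by
              conv_lhs => rw [← Nat.div_add_mod (b : ℕ) s]
              rw [hb']
            exact Fin.val_injective (by rw [e1, e2, hab'])
      _ = s := Finset.card_range s
  set S : ℕ → ℝ := fun k => ∑ i ∈ B k, |x (σ i)| with hS
  have hS_nonneg : ∀ k, 0 ≤ S k := fun k => Finset.sum_nonneg fun i _ => abs_nonneg _
  have hreindex : ∀ (k : ℕ) (F : ℝ → ℝ), F 0 = 0 →
      ∑ j, F (z k j) = ∑ i ∈ B k, F (x (σ i)) := by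
    intro k F hF0
    rw [← Equiv.sum_comp σ (fun j => F (z k j))]
    rw [hB, Finset.sum_filter]
    apply Finset.sum_congr rfl
    intro i _
    simp only [hz, Equiv.symm_apply_apply]
    by_cases h : (i : ℕ) / s = k <;> simp [h, hF0]
  have hStotal : ∑ k ∈ range N, S k = l1Norm x := by
    rw [l1Norm, ← Equiv.sum_comp σ (fun j => |x j|)]
    simp only [hS, hB, Finset.sum_filter]
    rw [Finset.sum_comm]
    apply Finset.sum_congr rfl
    intro i _
    rw [Finset.sum_ite_eq (range N) ((i : ℕ) / s) (fun _ => |x (σ i)|), if_pos]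
    exact mem_range.mpr (lt_of_le_of_lt (Nat.div_le_self _ _) i.isLt)
  -- key bound for tail blocks
  have hkey : ∀ k : ℕ, 1 ≤ k → l2Norm (z k) ≤ S (k - 1) / Real.sqrt s := by
    intro k hk
    rcases Finset.eq_empty_or_nonempty (B k) with hBk | hBk
    · have hzero : ∑ j, (z k j) ^ 2 = 0 := by
        rw [hreindex k (fun t => t ^ 2) (by norm_num), hBk, Finset.sum_empty]
      rw [l2Norm, hzero, Real.sqrt_zero]
      positivity
    · obtain ⟨i0, hi0⟩ := hBk
      have hi0' : (i0 : ℕ) / s = k := (Finset.mem_filter.mp hi0).2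
      have hks0 : k * s ≤ (i0 : ℕ) := (Nat.le_div_iff_mul_le hs).mp (le_of_eq hi0'.symm)
      have hksN : k * s < N := lt_of_le_of_lt hks0 i0.isLt
      -- card of previous block is ≥ s
      have hcard : s ≤ (B (k - 1)).card := by
        have : (Finset.range s).card ≤ (B (k - 1)).card := by
          apply Finset.card_le_card_of_injOn
            (fun a => (⟨((k - 1) * s + a) % N, Nat.mod_lt _ hN⟩ : Fin N))
          · intro a ha
            have ha' : a < s := Finset.mem_range.mp ha
            have hlt : (k - 1) * s + a < N := by
              have : (k - 1) * s + a < k * s := by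
                have : (k - 1) * s + s ≤ k * s := by
                  have : (k - 1 + 1) * s = (k - 1) * s + s := by ring
                  rw [← this]
                  exact Nat.mul_le_mul_right s (by omega)
                omega
              omega
            simp only [hB, Finset.mem_coe, Finset.mem_filter, Finset.mem_univ, true_and]
            show (((k - 1) * s + a) % N) / s = k - 1
            rw [Nat.mod_eq_of_lt hlt, Nat.add_comm, Nat.add_mul_div_right _ _ hs,
              Nat.div_eq_of_lt ha', Nat.zero_add]
          · intro a ha b hb hab
            have ha' : a < s := Finset.mem_range.mp (by simpa using ha)
            have hb' : b < s := Finset.mem_range.mp (by simpa using hb)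
            have hlta : (k - 1) * s + a < N := by
              have h1 : (k - 1) * s + s ≤ k * s := by
                have h2 : (k - 1 + 1) * s = (k - 1) * s + s := by ring
                rw [← h2]; exact Nat.mul_le_mul_right s (by omega)
              omega
            have hltb : (k - 1) * s + b < N := by
              have h1 : (k - 1) * s + s ≤ k * s := by
                have h2 : (k - 1 + 1) * s = (k - 1) * s + s := by ring
                rw [← h2]; exact Nat.mul_le_mul_right s (by omega)
              omega
            have := congrArg Fin.val hab
            simp only [Nat.mod_eq_of_lt hlta, Nat.mod_eq_of_lt hltb] at this
            omega
        simpa using this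
      -- pointwise bound on block k entries
      have hc : ∀ i ∈ B k, |x (σ i)| ≤ S (k - 1) / s := by
        intro i hi
        have hi' : (i : ℕ) / s = k := (Finset.mem_filter.mp hi).2
        have hge : ∀ j ∈ B (k - 1), |x (σ i)| ≤ |x (σ j)| := by
          intro j hj
          have hj' : (j : ℕ) / s = k - 1 := (Finset.mem_filter.mp hj).2
          have hjlt : (j : ℕ) < k * s := by
            have : (j : ℕ) / s < k := by omega
            exact (Nat.div_lt_iff_lt_mul hs).mp (by omega)
          have hik : k * s ≤ (i : ℕ) := (Nat.le_div_iff_mul_le hs).mp (le_of_eq hi'.symm)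
          exact hanti i j (by rw [Fin.le_def]; omega)
        have hsmul := Finset.card_nsmul_le_sum (B (k - 1)) (fun j => |x (σ j)|) (|x (σ i)|) hge
        rw [nsmul_eq_mul] at hsmul
        have habs : (0 : ℝ) ≤ |x (σ i)| := abs_nonneg _
        have hcards : (s : ℝ) ≤ ((B (k - 1)).card : ℝ) := by exact_mod_cast hcard
        have hsmul2 : (s : ℝ) * |x (σ i)| ≤ S (k - 1) := by
          calc (s : ℝ) * |x (σ i)| ≤ ((B (k - 1)).card : ℝ) * |x (σ i)| :=
                mul_le_mul_of_nonneg_right hcards habs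
            _ ≤ S (k - 1) := hsmul
        rw [le_div_iff₀ (by exact_mod_cast hs)]
        linarith [hsmul2]
      -- sum of squares bound
      have hsum : ∑ j, (z k j) ^ 2 ≤ S (k - 1) ^ 2 / s := by
        rw [hreindex k (fun t => t ^ 2) (by norm_num)]
        calc ∑ i ∈ B k, (x (σ i)) ^ 2 ≤ ∑ _i ∈ B k, (S (k - 1) / s) ^ 2 := by
              apply Finset.sum_le_sum
              intro i hi
              have h1 := hc i hi
              have h0 : 0 ≤ |x (σ i)| := abs_nonneg _
              calc (x (σ i)) ^ 2 = |x (σ i)| ^ 2 := (sq_abs _).symm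
                _ ≤ (S (k - 1) / s) ^ 2 := by nlinarith
          _ = ((B k).card : ℝ) * (S (k - 1) / s) ^ 2 := by
              rw [Finset.sum_const, nsmul_eq_mul]
          _ ≤ (s : ℝ) * (S (k - 1) / s) ^ 2 := by
              apply mul_le_mul_of_nonneg_right _ (sq_nonneg _)
              exact_mod_cast hBcard k
          _ = S (k - 1) ^ 2 / s := by
              field_simp
        -- done
      rw [l2Norm]
      calc Real.sqrt (∑ j, (z k j) ^ 2) ≤ Real.sqrt (S (k - 1) ^ 2 / s) :=
            Real.sqrt_le_sqrt hsum
        _ = S (k - 1) / Real.sqrt s := by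
            rw [Real.sqrt_div (sq_nonneg _), Real.sqrt_sq (hS_nonneg _)]
  -- assemble
  set T : Fin N → ℝ := ∑ k ∈ Finset.Ico 1 N, z k with hT
  have hxT : x = z 0 + T := by
    rw [hdecomp, hT, Finset.range_eq_Ico, Finset.sum_eq_sum_Ico_succ_bot hN]
  have ht : ∑ k ∈ Finset.Ico 1 N, l2Norm (z k) ≤ l1Norm x / Real.sqrt s := by
    calc ∑ k ∈ Finset.Ico 1 N, l2Norm (z k)
        ≤ ∑ k ∈ Finset.Ico 1 N, S (k - 1) / Real.sqrt s :=
          Finset.sum_le_sum (fun k hk => hkey k (Finset.mem_Ico.mp hk).1)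
      _ = (∑ k ∈ Finset.Ico 1 N, S (k - 1)) / Real.sqrt s := by rw [Finset.sum_div]
      _ ≤ (∑ k ∈ range N, S k) / Real.sqrt s := by
          have hsum_le : ∑ k ∈ Finset.Ico 1 N, S (k - 1) ≤ ∑ k ∈ range N, S k := by
            have heq : ∑ k ∈ Finset.Ico 1 N, S (k - 1) = ∑ k ∈ range (N - 1), S k := by
              rw [Finset.sum_Ico_eq_sum_range]
              apply Finset.sum_congr rfl
              intro i _
              congr 1
              omega
            rw [heq]
            apply Finset.sum_le_sum_of_subset_of_nonneg
            · exact Finset.range_subset_range.mpr (by omega)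
            · intro k _ _
              exact hS_nonneg k
          exact div_le_div_of_nonneg_right hsum_le hsqrt.le
      _ = l1Norm x / Real.sqrt s := by rw [hStotal]
  have hT2 : l2Norm T ≤ l1Norm x / Real.sqrt s := le_trans (l2Norm_sum_le _ _) ht
  have hz0_l2 : l2Norm x ≤ l2Norm (z 0) + l1Norm x / Real.sqrt s := by
    calc l2Norm x = l2Norm (z 0 + T) := by rw [← hxT]
      _ ≤ l2Norm (z 0) + l2Norm T := l2Norm_add_le _ _
      _ ≤ _ := by linarith
  have hRIP0 := (hRIP (z 0) (hsparse 0)).1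
  have hΦT : lpNorm p (Φ T) ≤ μ * (1 + δ) * (l1Norm x / Real.sqrt s) := by
    calc lpNorm p (Φ T) = lpNorm p (∑ k ∈ Finset.Ico 1 N, Φ (z k)) := by rw [hT, map_sum]
      _ ≤ ∑ k ∈ Finset.Ico 1 N, lpNorm p (Φ (z k)) := lpNorm_sum_le hp _ _
      _ ≤ ∑ k ∈ Finset.Ico 1 N, μ * (1 + δ) * l2Norm (z k) :=
          Finset.sum_le_sum (fun k _ => (hRIP (z k) (hsparse k)).2)
      _ = μ * (1 + δ) * ∑ k ∈ Finset.Ico 1 N, l2Norm (z k) := by rw [Finset.mul_sum]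
      _ ≤ μ * (1 + δ) * (l1Norm x / Real.sqrt s) :=
          mul_le_mul_of_nonneg_left ht (by nlinarith)
  have hΦz0 : lpNorm p (Φ (z 0)) ≤ lpNorm p (Φ x) + lpNorm p (Φ T) := by
    have heq : Φ (z 0) = Φ x + -(Φ T) := by
      rw [hxT, map_add]; abel
    rw [heq]
    exact le_trans (lpNorm_add_le hp _ _) (by rw [lpNorm_neg])
  -- final arithmetic
  have hμδ : (0 : ℝ) ≤ μ * (1 - δ) := by nlinarith
  have h1 : μ * (1 - δ) * l2Norm x ≤ μ * (1 - δ) * (l2Norm (z 0) + l1Norm x / Real.sqrt s) :=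
    mul_le_mul_of_nonneg_left hz0_l2 hμδ
  have hL1 : 0 ≤ l1Norm x / Real.sqrt s :=
    div_nonneg (Finset.sum_nonneg fun i _ => abs_nonneg _) (le_of_lt hsqrt)
  have hfinal : l2Norm x ≤ 3 * (l1Norm x / Real.sqrt s) := by
    nlinarith [h1, hRIP0, hΦz0, hΦT, hx, hμ, hL1]
  calc l2Norm x ≤ 3 * (l1Norm x / Real.sqrt s) := hfinal
    _ = (3 / Real.sqrt s) * l1Norm x := by ring
end

section
/- There exists an absolute constant c > 0 such that for every pair of positive integers s ≤ N, the Gaussian width of the set √s·B_{ℓ1} ∩ S^{N−1} = {x ∈ ℝ^N : ‖x‖_{ℓ1} ≤ √s and ‖x‖_{ℓ2} = 1} satisfies w(√s·B_{ℓ1} ∩ S^{N−1}) ≤ c·√(s·log(eN/s)). -/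
open MeasureTheory ProbabilityTheory Finset

/-- The law of a standard Gaussian vector in ℝ^N (i.i.d. N(0,1) coordinates). -/
noncomputable def stdGaussianVec (N : ℕ) : Measure (Fin N → ℝ) :=
  Measure.pi fun _ => gaussianReal 0 1

/-- The Gaussian width of a set T ⊆ ℝ^N. -/
noncomputable def gaussianWidth {N : ℕ} (T : Set (Fin N → ℝ)) : ℝ :=
  ∫ g, sSup ((fun x : Fin N → ℝ => ∑ j, g j * x j) '' T) ∂(stdGaussianVec N)

open Real Filter
open scoped ENNReal NNReal

theorem CM.integral_pi_prod {n : ℕ} (μ : Measure ℝ) [IsProbabilityMeasure μ] (f : Fin n → ℝ → ℝ) :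
    ∫ x : Fin n → ℝ, ∏ i, f i (x i) ∂(Measure.pi fun _ => μ) = ∏ i, ∫ x, f i x ∂μ := by
  induction n with
  | zero => simp
  | succ n n_ih =>
      calc
        _ = ∫ x : ℝ × (Fin n → ℝ),
            f 0 x.1 * ∏ i : Fin n, f (Fin.succ i) (x.2 i) ∂(μ.prod (Measure.pi fun _ => μ)) := by
          rw [← ((measurePreserving_piFinSuccAbove
            (fun _ : Fin (n+1) => μ) 0).symm).integral_comp']
          simp only [MeasurableEquiv.piFinSuccAbove_symm_apply, Fin.insertNthEquiv,
            Fin.prod_univ_succ, Fin.insertNth_zero, Equiv.coe_fn_mk, Fin.cons_succ,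
            Fin.zero_succAbove, Fin.cons_zero, cast_eq]
        _ = (∫ x, f 0 x ∂μ) * ∏ i : Fin n, ∫ x : ℝ, f (Fin.succ i) x ∂μ := by
          rw [← n_ih, ← integral_prod_mul]
        _ = ∏ i, ∫ x, f i x ∂μ := by rw [Fin.prod_univ_succ]

theorem CM.integrable_pi_prod {n : ℕ} (μ : Measure ℝ) [IsProbabilityMeasure μ] {f : Fin n → ℝ → ℝ}
    (hf : ∀ i, Integrable (f i) μ) :
    Integrable (fun x : Fin n → ℝ => ∏ i, f i (x i)) (Measure.pi fun _ => μ) := by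
  induction n with
  | zero =>
      simp only [Finset.univ_eq_empty, Finset.prod_empty]
      exact integrable_const _
  | succ n n_ih =>
      have := ((measurePreserving_piFinSuccAbove (fun _ : Fin (n+1) => μ) 0).symm)
      rw [← this.integrable_comp_emb (MeasurableEquiv.measurableEmbedding _)]
      simp_rw [MeasurableEquiv.piFinSuccAbove_symm_apply, Fin.insertNthEquiv,
        Fin.prod_univ_succ, Fin.insertNth_zero]
      simp only [Fin.zero_succAbove, Function.comp_def, Fin.cons_zero, Fin.cons_succ,
        Equiv.coe_fn_mk]
      exact Integrable.mul_prod (hf 0) (n_ih (fun i => hf _))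

theorem CM.measurePreserving_eval {N : ℕ} (μ : Measure ℝ) [IsProbabilityMeasure μ] (j : Fin N) :
    MeasurePreserving (Function.eval j) (Measure.pi fun _ => μ) μ := by
  refine ⟨measurable_pi_apply j, ?_⟩
  ext s hs
  rw [Measure.map_apply (measurable_pi_apply j) hs, Set.eval_preimage]
  rw [Measure.pi_pi]
  rw [Finset.prod_eq_single j]
  · simp
  · intro i _ hij; simp [Function.update_of_ne hij]
  · simp

theorem CM.integral_exp_quarter_sq : ∫ x, Real.exp (x ^ 2 / 4) ∂(gaussianReal 0 1) = Real.sqrt 2 := by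
  rw [gaussianReal_of_var_ne_zero 0 one_ne_zero]
  have hpdf : gaussianPDF 0 1 = fun x => ((Real.toNNReal (gaussianPDFReal 0 1 x) : ℝ≥0) : ℝ≥0∞) := by
    funext x; rfl
  rw [hpdf, integral_withDensity_eq_integral_smul
    ((measurable_gaussianPDFReal 0 1).real_toNNReal) _]
  have : ∀ x : ℝ, (Real.toNNReal (gaussianPDFReal 0 1 x) : ℝ≥0) • Real.exp (x ^ 2 / 4)
      = (Real.sqrt (2 * π))⁻¹ * Real.exp (-(4⁻¹ : ℝ) * x ^ 2) := by
    intro x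
    rw [NNReal.smul_def, Real.coe_toNNReal _ (gaussianPDFReal_nonneg 0 1 x)]
    unfold gaussianPDFReal
    push_cast
    rw [smul_eq_mul, mul_assoc, ← Real.exp_add, mul_one]
    congr 1
    ring_nf
  simp_rw [this]
  rw [integral_const_mul, integral_gaussian]
  rw [show (π / 4⁻¹ : ℝ) = 4 * π by ring]
  rw [show (4 : ℝ) * π = 2 * (2 * π) by ring, Real.sqrt_mul (by norm_num)]
  have h2π : (0:ℝ) < Real.sqrt (2 * π) := Real.sqrt_pos.2 (by positivity)
  field_simp
  rw [Real.sqrt_mul (by positivity), Real.sqrt_sq (by norm_num), Real.sq_sqrt (by norm_num)]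

theorem CM.integrable_exp_quarter_sq :
    Integrable (fun x => Real.exp (x ^ 2 / 4)) (gaussianReal 0 1) := by
  rw [gaussianReal_of_var_ne_zero 0 one_ne_zero]
  rw [integrable_withDensity_iff (measurable_gaussianPDF 0 1)
    (Eventually.of_forall fun x => ENNReal.ofReal_lt_top)]
  have : ∀ x : ℝ, Real.exp (x ^ 2 / 4) * (gaussianPDF 0 1 x).toReal
      = (Real.sqrt (2 * π))⁻¹ * Real.exp (-(4⁻¹ : ℝ) * x ^ 2) := by
    intro x
    rw [gaussianPDF, ENNReal.toReal_ofReal (gaussianPDFReal_nonneg 0 1 x)]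
    unfold gaussianPDFReal
    push_cast
    rw [mul_comm, mul_assoc, ← Real.exp_add, mul_one]
    congr 1
    ring_nf
  simp_rw [this]
  exact (integrable_exp_neg_mul_sq (by norm_num : (0:ℝ) < 4⁻¹)).const_mul _

theorem CM.integrable_sq_gaussian : Integrable (fun x : ℝ => x ^ 2) (gaussianReal 0 1) := by
  refine Integrable.mono' (CM.integrable_exp_quarter_sq.const_mul 4)
    (by fun_prop) (Eventually.of_forall fun x => ?_)
  rw [Real.norm_eq_abs, abs_of_nonneg (by positivity)]
  have h := Real.add_one_le_exp (x ^ 2 / 4)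
  nlinarith [Real.exp_pos (x^2/4)]

theorem CM.pow_self_le_exp_mul_factorial (s : ℕ) : (s:ℝ) ^ s ≤ Real.exp s * s.factorial := by
  have h1 : (s:ℝ) ^ s / s.factorial ≤ Real.exp s := by
    calc (s:ℝ) ^ s / s.factorial
        ≤ ∑ i ∈ Finset.range (s+1), (s:ℝ) ^ i / i.factorial := by
          exact Finset.single_le_sum (f := fun i => (s:ℝ) ^ i / i.factorial)
            (fun i _ => by positivity) (Finset.self_mem_range_succ s)
      _ ≤ Real.exp s := Real.sum_le_exp_of_nonneg (by positivity) (s+1)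
  have hfac : (0:ℝ) < s.factorial := by exact_mod_cast s.factorial_pos
  calc (s:ℝ) ^ s = (s:ℝ) ^ s / s.factorial * s.factorial := by field_simp
    _ ≤ Real.exp s * s.factorial := by
        apply mul_le_mul_of_nonneg_right h1 hfac.le

theorem CM.choose_le_pow (s N : ℕ) (hs : 0 < s) (hsN : s ≤ N) :
    (N.choose s : ℝ) ≤ (Real.exp 1 * N / s) ^ s := by
  have hfac : (0:ℝ) < s.factorial := by exact_mod_cast s.factorial_pos
  have hspos : (0:ℝ) < s := by exact_mod_cast hs
  have h1 : (N.choose s : ℝ) ≤ (N:ℝ) ^ s / s.factorial := Nat.choose_le_pow_div s N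
  refine h1.trans ?_
  have h2 : ((s:ℝ)/Real.exp 1) ^ s ≤ s.factorial := by
    rw [div_pow, div_le_iff₀ (by positivity)]
    calc (s:ℝ)^s ≤ Real.exp s * s.factorial := CM.pow_self_le_exp_mul_factorial s
      _ = s.factorial * Real.exp 1 ^ s := by rw [← Real.exp_nat_mul, mul_one, mul_comm]
  have hq : (0:ℝ) < ((s:ℝ)/Real.exp 1) ^ s := by positivity
  calc (N:ℝ) ^ s / s.factorial ≤ (N:ℝ)^s / ((s:ℝ)/Real.exp 1) ^ s := by
        apply div_le_div_of_nonneg_left (by positivity) hq h2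
    _ = (Real.exp 1 * N / s) ^ s := by
        rw [← div_pow]
        congr 1
        field_simp

theorem CM.sup_bound {s N : ℕ} (hs : 0 < s) (hsN : s ≤ N)
    (𝒮 : Finset (Finset (Fin N))) (h𝒮def : 𝒮 = Finset.powersetCard s Finset.univ)
    (h𝒮 : 𝒮.Nonempty) (g : Fin N → ℝ) (x : Fin N → ℝ)
    (hx1 : l1Norm x ≤ Real.sqrt s) (hx2 : l2Norm x = 1) :
    ∑ j, g j * x j ≤ 2 * Real.sqrt (𝒮.sup' h𝒮 (fun S => ∑ j ∈ S, g j ^ 2)) := by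
  set X : Finset (Fin N) → ℝ := fun S => ∑ j ∈ S, g j ^ 2 with hXdef
  have hXnonneg : ∀ S, 0 ≤ X S := fun S => Finset.sum_nonneg fun j _ => sq_nonneg _
  have hspos : (0:ℝ) < s := by exact_mod_cast hs
  -- x facts
  have hx2' : ∑ j, x j ^ 2 = 1 := by
    have h0 : (0:ℝ) ≤ ∑ j, x j ^ 2 := Finset.sum_nonneg fun j _ => sq_nonneg _
    have := congrArg (fun t : ℝ => t ^ 2) hx2
    simpa [l2Norm, Real.sq_sqrt h0] using this
  -- maximal S
  obtain ⟨S, hSmem, hSmax⟩ := Finset.exists_max_image 𝒮 X h𝒮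
  have hScard : S.card = s := by
    have := hSmem; rw [h𝒮def, Finset.mem_powersetCard_univ] at this; exact this
  -- swap property
  have hswap : ∀ j ∉ S, ∀ i ∈ S, g j ^ 2 ≤ g i ^ 2 := by
    intro j hj i hi
    have hjS' : j ∉ S.erase i := fun h => hj (Finset.mem_of_mem_erase h)
    have hcard : (insert j (S.erase i)).card = s := by
      rw [Finset.card_insert_of_notMem hjS', Finset.card_erase_of_mem hi, hScard]
      omega
    have hmem' : insert j (S.erase i) ∈ 𝒮 := by
      rw [h𝒮def, Finset.mem_powersetCard_univ]; exact hcard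
    have h1 := hSmax _ hmem'
    simp only [hXdef] at h1
    rw [Finset.sum_insert hjS'] at h1
    have h2 : ∑ k ∈ S.erase i, g k ^ 2 + g i ^ 2 = ∑ k ∈ S, g k ^ 2 :=
      Finset.sum_erase_add S _ hi
    linarith
  -- bound on S
  have hA : ∑ j ∈ S, g j * x j ≤ Real.sqrt (X S) := by
    have hcs := Finset.sum_mul_sq_le_sq_mul_sq S g x
    have hxS : ∑ j ∈ S, x j ^ 2 ≤ 1 := by
      rw [← hx2']
      exact Finset.sum_le_sum_of_subset_of_nonneg (Finset.subset_univ S)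
        (fun j _ _ => sq_nonneg _)
    have h1 : (∑ j ∈ S, g j * x j) ^ 2 ≤ X S := by
      refine hcs.trans ?_
      calc X S * ∑ j ∈ S, x j ^ 2 ≤ X S * 1 :=
            mul_le_mul_of_nonneg_left hxS (hXnonneg S)
        _ = X S := mul_one _
    calc ∑ j ∈ S, g j * x j ≤ |∑ j ∈ S, g j * x j| := le_abs_self _
      _ ≤ Real.sqrt (X S) := Real.abs_le_sqrt h1
  -- bound off S
  have hB : ∑ j ∈ Sᶜ, g j * x j ≤ Real.sqrt (X S) := by
    have hout : ∀ j ∈ Sᶜ, |g j| ≤ Real.sqrt (X S / s) := by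
      intro j hj
      rw [Finset.mem_compl] at hj
      refine Real.abs_le_sqrt ?_
      rw [le_div_iff₀ hspos]
      calc g j ^ 2 * s = ∑ _i ∈ S, g j ^ 2 := by
            rw [Finset.sum_const, hScard, nsmul_eq_mul, mul_comm]
        _ ≤ ∑ i ∈ S, g i ^ 2 := Finset.sum_le_sum fun i hi => hswap j hj i hi
    calc ∑ j ∈ Sᶜ, g j * x j ≤ ∑ j ∈ Sᶜ, Real.sqrt (X S / s) * |x j| := by
          refine Finset.sum_le_sum fun j hj => ?_
          calc g j * x j ≤ |g j * x j| := le_abs_self _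
            _ = |g j| * |x j| := abs_mul _ _
            _ ≤ Real.sqrt (X S / s) * |x j| :=
                mul_le_mul_of_nonneg_right (hout j hj) (abs_nonneg _)
      _ = Real.sqrt (X S / s) * ∑ j ∈ Sᶜ, |x j| := by rw [Finset.mul_sum]
      _ ≤ Real.sqrt (X S / s) * Real.sqrt s := by
          refine mul_le_mul_of_nonneg_left ?_ (Real.sqrt_nonneg _)
          calc ∑ j ∈ Sᶜ, |x j| ≤ ∑ j, |x j| :=
                Finset.sum_le_sum_of_subset_of_nonneg (Finset.subset_univ _)
                  (fun j _ _ => abs_nonneg _)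
            _ ≤ Real.sqrt s := hx1
      _ = Real.sqrt (X S) := by
          rw [← Real.sqrt_mul (by positivity), div_mul_cancel₀]
          exact ne_of_gt hspos
  have hsum : ∑ j, g j * x j = ∑ j ∈ S, g j * x j + ∑ j ∈ Sᶜ, g j * x j :=
    (Finset.sum_add_sum_compl S _).symm
  have hXle : Real.sqrt (X S) ≤ Real.sqrt (𝒮.sup' h𝒮 X) :=
    Real.sqrt_le_sqrt (Finset.le_sup' X hSmem)
  calc ∑ j, g j * x j = _ := hsum
    _ ≤ Real.sqrt (X S) + Real.sqrt (X S) := add_le_add hA hB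
    _ = 2 * Real.sqrt (X S) := by ring
    _ ≤ 2 * Real.sqrt (𝒮.sup' h𝒮 X) := by linarith

theorem CM.exp_prod_eq {N : ℕ} (S : Finset (Fin N)) (g : Fin N → ℝ) :
    Real.exp ((∑ j ∈ S, g j ^ 2) / 4)
      = ∏ j, (if j ∈ S then Real.exp ((g j) ^ 2 / 4) else 1) := by
  rw [Finset.prod_ite_mem, Finset.univ_inter, Finset.sum_div, Real.exp_sum]

theorem CM.integrable_exp_X {N : ℕ} (S : Finset (Fin N)) :
    Integrable (fun g : Fin N → ℝ => Real.exp ((∑ j ∈ S, g j ^ 2) / 4)) (stdGaussianVec N) := by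
  simp_rw [CM.exp_prod_eq]
  exact CM.integrable_pi_prod (gaussianReal 0 1)
    (f := fun j x => if j ∈ S then Real.exp (x ^ 2 / 4) else 1)
    (fun j => by by_cases h : j ∈ S <;> simp only [h, if_true, if_false]
                 · exact CM.integrable_exp_quarter_sq
                 · exact integrable_const 1)

theorem CM.integral_exp_X {N : ℕ} (S : Finset (Fin N)) :
    ∫ g, Real.exp ((∑ j ∈ S, g j ^ 2) / 4) ∂(stdGaussianVec N) = Real.sqrt 2 ^ S.card := by
  simp_rw [CM.exp_prod_eq]
  rw [show stdGaussianVec N = Measure.pi (fun _ => gaussianReal 0 1) from rfl,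
    CM.integral_pi_prod (gaussianReal 0 1)
      (f := fun j x => if j ∈ S then Real.exp (x ^ 2 / 4) else 1)]
  have : ∀ j : Fin N, (∫ x, (if j ∈ S then Real.exp (x ^ 2 / 4) else 1) ∂(gaussianReal 0 1))
      = if j ∈ S then Real.sqrt 2 else 1 := by
    intro j
    split_ifs
    · exact CM.integral_exp_quarter_sq
    · simp
  simp_rw [this]
  rw [Finset.prod_ite_mem, Finset.univ_inter, Finset.prod_const]

instance CM.probStd (N : ℕ) : IsProbabilityMeasure (stdGaussianVec N) := by
  unfold stdGaussianVec; infer_instance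

theorem CM.integrable_sq_coord {N : ℕ} (j : Fin N) :
    Integrable (fun g : Fin N → ℝ => g j ^ 2) (stdGaussianVec N) := by
  have h := (CM.measurePreserving_eval (gaussianReal 0 1) j).integrable_comp
    (g := fun x : ℝ => x ^ 2) CM.integrable_sq_gaussian.aestronglyMeasurable
  exact h.2 CM.integrable_sq_gaussian

theorem CM.integrable_sum_sq {N : ℕ} :
    Integrable (fun g : Fin N → ℝ => ∑ j, g j ^ 2) (stdGaussianVec N) :=
  integrable_finset_sum _ fun j _ => CM.integrable_sq_coord j

theorem CM.measurable_X {N : ℕ} (S : Finset (Fin N)) :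
    Measurable (fun g : Fin N → ℝ => ∑ j ∈ S, g j ^ 2) :=
  Finset.measurable_sum S fun j _ => (measurable_pi_apply j).pow_const 2

theorem CM.measurable_Mx {s N : ℕ} (𝒮 : Finset (Finset (Fin N))) (h𝒮 : 𝒮.Nonempty) :
    Measurable (fun g : Fin N → ℝ => 𝒮.sup' h𝒮 (fun S => ∑ j ∈ S, g j ^ 2)) := by
  have h := Finset.measurable_sup' h𝒮 (f := fun S (g : Fin N → ℝ) => ∑ j ∈ S, g j ^ 2)
    (fun S _ => CM.measurable_X S)
  have heq : (fun g : Fin N → ℝ => 𝒮.sup' h𝒮 (fun S => ∑ j ∈ S, g j ^ 2))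
      = 𝒮.sup' h𝒮 (fun S (g : Fin N → ℝ) => ∑ j ∈ S, g j ^ 2) := by
    funext g
    exact (Finset.sup'_apply h𝒮 (fun S (g : Fin N → ℝ) => ∑ j ∈ S, g j ^ 2) g).symm
  rw [heq]
  exact h

theorem CM.Mx_nonneg {s N : ℕ} (𝒮 : Finset (Finset (Fin N))) (h𝒮 : 𝒮.Nonempty)
    (g : Fin N → ℝ) : 0 ≤ 𝒮.sup' h𝒮 (fun S => ∑ j ∈ S, g j ^ 2) := by
  obtain ⟨S₀, hS₀⟩ := h𝒮
  exact le_trans (Finset.sum_nonneg fun j _ => sq_nonneg _)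
    (Finset.le_sup' (fun S => ∑ j ∈ S, g j ^ 2) hS₀)

theorem CM.Mx_le_sum {N : ℕ} (𝒮 : Finset (Finset (Fin N))) (h𝒮 : 𝒮.Nonempty) (g : Fin N → ℝ) :
    𝒮.sup' h𝒮 (fun S => ∑ j ∈ S, g j ^ 2) ≤ ∑ j, g j ^ 2 := by
  refine Finset.sup'_le h𝒮 _ fun S _ => ?_
  exact Finset.sum_le_sum_of_subset_of_nonneg (Finset.subset_univ S) fun j _ _ => sq_nonneg _

theorem CM.integrable_Mx {s N : ℕ} (𝒮 : Finset (Finset (Fin N))) (h𝒮 : 𝒮.Nonempty) :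
    Integrable (fun g : Fin N → ℝ => 𝒮.sup' h𝒮 (fun S => ∑ j ∈ S, g j ^ 2)) (stdGaussianVec N) := by
  refine Integrable.mono' CM.integrable_sum_sq
    (CM.measurable_Mx (s := s) 𝒮 h𝒮).aestronglyMeasurable
    (Eventually.of_forall fun g => ?_)
  rw [Real.norm_eq_abs, abs_of_nonneg (CM.Mx_nonneg (s := s) 𝒮 h𝒮 g)]
  exact CM.Mx_le_sum 𝒮 h𝒮 g

theorem CM.expectation_Mx_le {s N : ℕ} (hs : 0 < s) (hsN : s ≤ N)
    (𝒮 : Finset (Finset (Fin N))) (h𝒮def : 𝒮 = Finset.powersetCard s Finset.univ)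
    (h𝒮 : 𝒮.Nonempty) :
    ∫ g, 𝒮.sup' h𝒮 (fun S => ∑ j ∈ S, g j ^ 2) ∂(stdGaussianVec N)
      ≤ 4 * Real.log ((N.choose s : ℝ) * Real.sqrt 2 ^ s) + 4 := by
  set K : ℝ := (N.choose s : ℝ) * Real.sqrt 2 ^ s with hKdef
  have hKpos : 0 < K := by
    have h1 : 0 < N.choose s := Nat.choose_pos hsN
    have : (0:ℝ) < (N.choose s : ℝ) := by exact_mod_cast h1
    positivity
  set a : ℝ := 4 * Real.log K with hadef
  have hexpa : Real.exp (-(a/4)) = K⁻¹ := by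
    rw [hadef]
    rw [show (4 * Real.log K) / 4 = Real.log K by ring, Real.exp_neg, Real.exp_log hKpos]
  -- pointwise bound
  have hpt : ∀ g : Fin N → ℝ, 𝒮.sup' h𝒮 (fun S => ∑ j ∈ S, g j ^ 2)
      ≤ a + ∑ S ∈ 𝒮, 4 * Real.exp (-(a/4)) * Real.exp ((∑ j ∈ S, g j ^ 2) / 4) := by
    intro g
    obtain ⟨S₀, hS₀mem, hS₀⟩ := Finset.exists_mem_eq_sup' h𝒮 (fun S => ∑ j ∈ S, g j ^ 2)
    rw [hS₀]
    set u : ℝ := (∑ j ∈ S₀, g j ^ 2) - a with hudef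
    have h1 : u ≤ 4 * Real.exp (u / 4) := by
      have := Real.add_one_le_exp (u / 4)
      linarith
    have h2 : 4 * Real.exp (u / 4)
        = 4 * Real.exp (-(a/4)) * Real.exp ((∑ j ∈ S₀, g j ^ 2) / 4) := by
      rw [mul_assoc, ← Real.exp_add, hudef]
      ring_nf
    have h3 : 4 * Real.exp (-(a/4)) * Real.exp ((∑ j ∈ S₀, g j ^ 2) / 4)
        ≤ ∑ S ∈ 𝒮, 4 * Real.exp (-(a/4)) * Real.exp ((∑ j ∈ S, g j ^ 2) / 4) :=
      Finset.single_le_sum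
        (f := fun S => 4 * Real.exp (-(a/4)) * Real.exp ((∑ j ∈ S, g j ^ 2) / 4))
        (fun S _ => by positivity) hS₀mem
    rw [h2] at h1
    rw [hudef] at h1
    linarith
  have hIntRHS : Integrable (fun g : Fin N → ℝ =>
      a + ∑ S ∈ 𝒮, 4 * Real.exp (-(a/4)) * Real.exp ((∑ j ∈ S, g j ^ 2) / 4))
      (stdGaussianVec N) := by
    refine (integrable_const a).add ?_
    exact integrable_finset_sum _ fun S _ => (CM.integrable_exp_X S).const_mul _
  have hmono := integral_mono (CM.integrable_Mx (s := s) 𝒮 h𝒮) hIntRHS hpt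
  refine hmono.trans ?_
  rw [integral_add (integrable_const a)
    (integrable_finset_sum _ fun S _ => (CM.integrable_exp_X S).const_mul _)]
  rw [integral_const]
  simp only [measure_univ, probReal_univ, ENNReal.toReal_one, smul_eq_mul, one_mul]
  rw [integral_finset_sum _ fun S _ => (CM.integrable_exp_X S).const_mul _]
  have hsummand : ∀ S ∈ 𝒮, ∫ g, 4 * Real.exp (-(a/4))
      * Real.exp ((∑ j ∈ S, g j ^ 2) / 4) ∂(stdGaussianVec N)
      = 4 * Real.exp (-(a/4)) * Real.sqrt 2 ^ s := by
    intro S hS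
    rw [integral_const_mul, CM.integral_exp_X]
    congr 2
    rw [h𝒮def, Finset.mem_powersetCard_univ] at hS
    rw [hS]
  rw [Finset.sum_congr rfl hsummand, Finset.sum_const]
  have hcard : 𝒮.card = N.choose s := by
    rw [h𝒮def, Finset.card_powersetCard, Finset.card_univ, Fintype.card_fin]
  rw [hcard, hexpa, nsmul_eq_mul]
  have : (N.choose s : ℝ) * (4 * K⁻¹ * Real.sqrt 2 ^ s) = 4 * (K⁻¹ * K) := by
    rw [hKdef]; ring
  rw [this, inv_mul_cancel₀ (ne_of_gt hKpos), mul_one]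


theorem CM.log_bound {s N : ℕ} (hs : 0 < s) (hsN : s ≤ N) :
    4 * Real.log ((N.choose s : ℝ) * Real.sqrt 2 ^ s) + 4
      ≤ 10 * ((s:ℝ) * Real.log (Real.exp 1 * N / s)) := by
  set L : ℝ := Real.log (Real.exp 1 * N / s) with hLdef
  have hspos : (0:ℝ) < s := by exact_mod_cast hs
  have hNs : (s:ℝ) ≤ N := by exact_mod_cast hsN
  have hL : 1 ≤ L := by
    rw [hLdef]
    calc (1:ℝ) = Real.log (Real.exp 1) := (Real.log_exp 1).symm
      _ ≤ _ := by
          refine Real.log_le_log (Real.exp_pos 1) ?_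
          rw [mul_div_assoc]
          nlinarith [Real.exp_pos 1, (one_le_div hspos).2 hNs]
  have hchoosepos : (0:ℝ) < (N.choose s : ℝ) := by exact_mod_cast Nat.choose_pos hsN
  have hlogchoose : Real.log (N.choose s) ≤ (s:ℝ) * L := by
    calc Real.log (N.choose s) ≤ Real.log ((Real.exp 1 * N / s) ^ s) :=
          Real.log_le_log hchoosepos (CM.choose_le_pow s N hs hsN)
      _ = (s:ℝ) * L := by rw [Real.log_pow, hLdef]
  have hlogsqrt2 : Real.log (Real.sqrt 2) ≤ 0.35 := by
    rw [Real.log_sqrt (by norm_num)]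
    nlinarith [Real.log_two_lt_d9]
  rw [Real.log_mul (ne_of_gt hchoosepos) (by positivity), Real.log_pow]
  have h1 : (s:ℝ) * Real.log (Real.sqrt 2) ≤ 0.35 * ((s:ℝ) * L) := by
    nlinarith [mul_le_mul_of_nonneg_left hlogsqrt2 hspos.le,
      mul_le_mul_of_nonneg_left hL (by positivity : (0:ℝ) ≤ 0.35 * (s:ℝ))]
  have hs1 : (1:ℝ) ≤ s := by exact_mod_cast hs
  have hsL : 1 ≤ (s:ℝ) * L := by nlinarith
  nlinarith

/-- Lemma 4 (Lemma 16 in Cahill–Mixon): there is an absolute constant c such that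
w(√s B_{ℓ1} ∩ S^{N−1}) ≤ c √(s log(eN/s)) for all positive integers s ≤ N. -/
theorem gaussian_width_sqrt_s_ball :
    ∃ c : ℝ, 0 < c ∧ ∀ (s N : ℕ), 0 < s → s ≤ N →
      gaussianWidth {x : Fin N → ℝ | l1Norm x ≤ Real.sqrt s ∧ l2Norm x = 1} ≤
        c * Real.sqrt (s * Real.log (Real.exp 1 * N / s)) := by
  refine ⟨7, by norm_num, fun s N hs hsN => ?_⟩
  have hspos : (0:ℝ) < s := by exact_mod_cast hs
  have hNs : (s:ℝ) ≤ N := by exact_mod_cast hsN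
  set L : ℝ := Real.log (Real.exp 1 * N / s) with hLdef
  have hL : 1 ≤ L := by
    rw [hLdef]
    calc (1:ℝ) = Real.log (Real.exp 1) := (Real.log_exp 1).symm
      _ ≤ _ := by
          refine Real.log_le_log (Real.exp_pos 1) ?_
          rw [mul_div_assoc]
          nlinarith [Real.exp_pos 1, (one_le_div hspos).2 hNs]
  have hs1 : (1:ℝ) ≤ s := by exact_mod_cast hs
  have hsL : 1 ≤ (s:ℝ) * L := by nlinarith
  have hRHS : 0 ≤ 7 * Real.sqrt ((s:ℝ) * L) := by positivity
  set T : Set (Fin N → ℝ) := {x | l1Norm x ≤ Real.sqrt s ∧ l2Norm x = 1} with hTdef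
  by_cases hInt : Integrable
      (fun g : Fin N → ℝ => sSup ((fun x : Fin N → ℝ => ∑ j, g j * x j) '' T))
      (stdGaussianVec N)
  swap
  · rw [show gaussianWidth T
      = ∫ g, sSup ((fun x : Fin N → ℝ => ∑ j, g j * x j) '' T) ∂(stdGaussianVec N) from rfl,
      integral_undef hInt]
    exact hRHS
  · set 𝒮 : Finset (Finset (Fin N)) := Finset.powersetCard s Finset.univ with h𝒮def
    have h𝒮 : 𝒮.Nonempty := by
      rw [h𝒮def]
      rw [Finset.powersetCard_nonempty]
      simpa using hsN
    set Mx : (Fin N → ℝ) → ℝ := fun g => 𝒮.sup' h𝒮 (fun S => ∑ j ∈ S, g j ^ 2) with hMxdef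
    set t : ℝ := Real.sqrt (10 * ((s:ℝ) * L)) with htdef
    have htpos : 0 < t := Real.sqrt_pos.2 (by nlinarith)
    have htsq : t * t = 10 * ((s:ℝ) * L) := Real.mul_self_sqrt (by nlinarith)
    have hpt : ∀ g : Fin N → ℝ,
        sSup ((fun x : Fin N → ℝ => ∑ j, g j * x j) '' T) ≤ t + Mx g / t := by
      intro g
      have hMnn : 0 ≤ Mx g := CM.Mx_nonneg (s := s) 𝒮 h𝒮 g
      refine Real.sSup_le (fun y hy => ?_)
        (by positivity)
      obtain ⟨x, hxT, rfl⟩ := hy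
      rw [hTdef] at hxT
      have h1 := CM.sup_bound hs hsN 𝒮 h𝒮def h𝒮 g x hxT.1 hxT.2
      have h2 : 2 * Real.sqrt (Mx g) ≤ t + Mx g / t := by
        rw [← sub_le_iff_le_add', le_div_iff₀ htpos]
        nlinarith [sq_nonneg (Real.sqrt (Mx g) - t), Real.sq_sqrt hMnn]
      exact h1.trans h2
    have hIntR : Integrable (fun g : Fin N → ℝ => t + Mx g / t) (stdGaussianVec N) :=
      (integrable_const t).add ((CM.integrable_Mx (s := s) 𝒮 h𝒮).div_const t)
    have hwidth : gaussianWidth T ≤ ∫ g, (t + Mx g / t) ∂(stdGaussianVec N) :=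
      integral_mono hInt hIntR hpt
    have hcomp : ∫ g, (t + Mx g / t) ∂(stdGaussianVec N)
        = t + (∫ g, Mx g ∂(stdGaussianVec N)) / t := by
      rw [integral_add (integrable_const t) ((CM.integrable_Mx (s := s) 𝒮 h𝒮).div_const t),
        integral_const, integral_div]
      simp [measure_univ]
      rfl
    have hbound : (∫ g, Mx g ∂(stdGaussianVec N)) ≤ 10 * ((s:ℝ) * L) :=
      (CM.expectation_Mx_le hs hsN 𝒮 h𝒮def h𝒮).trans (CM.log_bound hs hsN)
    have hfinal : gaussianWidth T ≤ 2 * t := by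
      rw [hcomp] at hwidth
      refine hwidth.trans ?_
      have : (∫ g, Mx g ∂(stdGaussianVec N)) / t ≤ (10 * ((s:ℝ) * L)) / t :=
        (div_le_div_iff_of_pos_right htpos).2 hbound
      have heq : (10 * ((s:ℝ) * L)) / t = t := by
        rw [← htsq]
        field_simp
      linarith
    refine hfinal.trans ?_
    have hsqrt10 : Real.sqrt 10 ≤ 3.5 := by
      rw [show (3.5:ℝ) = Real.sqrt (3.5 ^ 2) from (Real.sqrt_sq (by norm_num)).symm]
      exact Real.sqrt_le_sqrt (by norm_num)
    have ht2 : t = Real.sqrt 10 * Real.sqrt ((s:ℝ) * L) := by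
      rw [htdef, Real.sqrt_mul (by norm_num)]
    rw [ht2]
    nlinarith [Real.sqrt_nonneg ((s:ℝ) * L), Real.sqrt_nonneg (10:ℝ)]
end
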